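/- arXiv:1311.5121 — 3 statements merged into one kernel-verified Lean document; each statement's English description precedes it below -/
import Mathlib

section
/- Let ρ be an elliptic N-function. Then for every δ > 0 there exists C_δ ≥ 1, depending only on δ and the characteristics of ρ, such that for all a ∈ ℝ^d and all t ≥ 0 one has ρ_{|a|}(t) ≤ C_δ ρ(t) + δ ρ(|a|) and ρ(t) ≤ C_δ ρ_{|a|}(t) + δ ρ(|a|). -/
open MeasureTheory Set Filter

noncomputable section

/-- An elliptic N-function `ρ` with (given) first and second derivatives `ρ'`, `ρ''` on
`[0,∞)` resp. `(0,∞)`, and characteristics `γ₁ ≤ γ₂`:  `ρ` is continuous, strictly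
increasing and convex on `[0,∞)` with `ρ(0) = 0`, `ρ(t)/t → 0` as `t → 0⁺`,
`t/ρ(t) → 0` as `t → ∞`, `ρ` is `C¹` on `[0,∞)` and `C²` on `(0,∞)`, and
`γ₁ ρ'(t) ≤ t ρ''(t) ≤ γ₂ ρ'(t)` for all `t > 0`. -/
structure IsEllipticNFun (ρ ρ' ρ'' : ℝ → ℝ) (γ₁ γ₂ : ℝ) : Prop where
  continuousOn : ContinuousOn ρ (Set.Ici 0)
  strictMonoOn : StrictMonoOn ρ (Set.Ici 0)
  convexOn : ConvexOn ℝ (Set.Ici 0) ρ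
  map_zero : ρ 0 = 0
  tendsto_zero : Filter.Tendsto (fun t => ρ t / t) (nhdsWithin 0 (Set.Ioi 0)) (nhds 0)
  tendsto_atTop : Filter.Tendsto (fun t => t / ρ t) Filter.atTop (nhds 0)
  hasDerivAt : ∀ t ∈ Set.Ici (0:ℝ), HasDerivWithinAt ρ (ρ' t) (Set.Ici 0) t
  derivContinuousOn : ContinuousOn ρ' (Set.Ici 0)
  hasDeriv2At : ∀ t ∈ Set.Ioi (0:ℝ), HasDerivAt ρ' (ρ'' t) t
  deriv2ContinuousOn : ContinuousOn ρ'' (Set.Ioi 0)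
  gamma_pos : 0 < γ₁
  gamma_le : γ₁ ≤ γ₂
  elliptic : ∀ t ∈ Set.Ioi (0:ℝ), γ₁ * ρ' t ≤ t * ρ'' t ∧ t * ρ'' t ≤ γ₂ * ρ' t

/-- The shift of a function with derivative `g`: `shift g a t = ∫₀ᵗ (g(a+τ)/(a+τ)) τ dτ`.
For `g = ρ'` this is the shifted N-function `ρ_a`. -/
def shift (g : ℝ → ℝ) (a t : ℝ) : ℝ :=
  ∫ τ in (0:ℝ)..t, (g (a + τ) / (a + τ)) * τ

/-- The derivative of the shifted function: `(ρ_a)'(t) = (ρ'(a+t)/(a+t)) t` for `g = ρ'`. -/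
def shiftD (g : ℝ → ℝ) (a t : ℝ) : ℝ :=
  (g (a + t) / (a + t)) * t

/-- The conjugate (Legendre transform) `f*(t) = sup_{s ≥ 0} (s t - f(s))`. -/
def conj (f : ℝ → ℝ) (t : ℝ) : ℝ :=
  sSup ((fun s => s * t - f s) '' Set.Ici 0)

variable {ρ ρ' ρ'' : ℝ → ℝ} {γ₁ γ₂ : ℝ}

lemma EN.rho_nonneg (h : IsEllipticNFun ρ ρ' ρ'' γ₁ γ₂) {t : ℝ} (ht : 0 ≤ t) : 0 ≤ ρ t := by
  rw [← h.map_zero]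
  exact h.strictMonoOn.monotoneOn (mem_Ici.2 le_rfl) (mem_Ici.2 ht) ht

lemma EN.rho_pos (h : IsEllipticNFun ρ ρ' ρ'' γ₁ γ₂) {t : ℝ} (ht : 0 < t) : 0 < ρ t := by
  rw [← h.map_zero]
  exact h.strictMonoOn (mem_Ici.2 le_rfl) (mem_Ici.2 ht.le) ht

lemma EN.deriv_nonneg (h : IsEllipticNFun ρ ρ' ρ'' γ₁ γ₂) {t : ℝ} (ht : 0 ≤ t) : 0 ≤ ρ' t := by
  have H := (hasDerivWithinAt_iff_tendsto_slope.1 (h.hasDerivAt t ht))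
  have hsub : Ioi t ⊆ Ici (0:ℝ) \ {t} := by
    intro s hs
    exact ⟨le_trans ht (le_of_lt hs), by simp [ne_of_gt (mem_Ioi.1 hs)]⟩
  refine ge_of_tendsto (H.mono_left (nhdsWithin_mono _ hsub)) ?_
  filter_upwards [self_mem_nhdsWithin] with s hs
  have hs' : t < s := hs
  rw [slope_def_field]
  apply div_nonneg _ (by linarith)
  have := h.strictMonoOn.monotoneOn (mem_Ici.2 ht) (mem_Ici.2 (ht.trans hs'.le)) hs'.le
  linarith

lemma EN.deriv_mono (h : IsEllipticNFun ρ ρ' ρ'' γ₁ γ₂) : MonotoneOn ρ' (Set.Ici 0) := by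
  apply monotoneOn_of_deriv_nonneg (convex_Ici 0) h.derivContinuousOn
  · intro x hx
    rw [interior_Ici] at hx
    exact ((h.hasDeriv2At x hx).differentiableAt).differentiableWithinAt
  · intro x hx
    rw [interior_Ici] at hx
    rw [(h.hasDeriv2At x hx).deriv]
    have h1 := (h.elliptic x hx).1
    have h2 := EN.deriv_nonneg h (le_of_lt hx)
    have h3 : (0:ℝ) < x := hx
    nlinarith [h.gamma_pos]

lemma EN.ftc (h : IsEllipticNFun ρ ρ' ρ'' γ₁ γ₂) {t : ℝ} (ht : 0 ≤ t) :
    ∫ τ in (0:ℝ)..t, ρ' τ = ρ t := by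
  have := intervalIntegral.integral_eq_sub_of_hasDeriv_right_of_le ht
    (h.continuousOn.mono Icc_subset_Ici_self)
    (fun x hx => (h.hasDerivAt x (le_of_lt hx.1)).mono
      (fun y hy => le_of_lt (hx.1.trans hy)))
    ((h.derivContinuousOn.mono (by rw [uIcc_of_le ht]; exact Icc_subset_Ici_self)).intervalIntegrable)
  rw [this, h.map_zero, sub_zero]

lemma EN.D_bound (h : IsEllipticNFun ρ ρ' ρ'' γ₁ γ₂) {t : ℝ} (ht : 0 ≤ t) :
    ρ t ≤ t * ρ' t := by
  rw [← EN.ftc h ht]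
  calc ∫ τ in (0:ℝ)..t, ρ' τ ≤ ∫ _ in (0:ℝ)..t, ρ' t := by
        apply intervalIntegral.integral_mono_on ht
          ((h.derivContinuousOn.mono (by rw [uIcc_of_le ht]; exact Icc_subset_Ici_self)).intervalIntegrable)
          intervalIntegrable_const
        intro x hx
        exact EN.deriv_mono h (mem_Ici.2 hx.1) (mem_Ici.2 ht) hx.2
    _ = t * ρ' t := by rw [intervalIntegral.integral_const, smul_eq_mul, sub_zero]

lemma EN.deriv_pos (h : IsEllipticNFun ρ ρ' ρ'' γ₁ γ₂) {t : ℝ} (ht : 0 < t) : 0 < ρ' t := by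
  have h1 := EN.D_bound h ht.le
  have h2 := EN.rho_pos h ht
  nlinarith

lemma EN.pow_bound (h : IsEllipticNFun ρ ρ' ρ'' γ₁ γ₂) {s u : ℝ} (hs : 0 < s) (hsu : s ≤ u) :
    ρ' u ≤ (u / s) ^ γ₂ * ρ' s := by
  have hγ₂ : 0 < γ₂ := lt_of_lt_of_le h.gamma_pos h.gamma_le
  have hu : 0 < u := lt_of_lt_of_le hs hsu
  set F : ℝ → ℝ := fun x => ρ' x * x ^ (-γ₂) with hF
  have hder : ∀ x ∈ Ioi (0:ℝ), HasDerivAt F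
      (ρ'' x * x ^ (-γ₂) + ρ' x * (-γ₂ * x ^ (-γ₂ - 1))) x := by
    intro x hx
    exact (h.hasDeriv2At x hx).mul (Real.hasDerivAt_rpow_const (Or.inl (ne_of_gt hx)))
  have hanti : AntitoneOn F (Ioi 0) := by
    apply antitoneOn_of_deriv_nonpos (convex_Ioi 0)
    · apply ContinuousOn.mul (h.derivContinuousOn.mono Ioi_subset_Ici_self)
      exact ContinuousOn.rpow_const continuousOn_id (fun x hx => Or.inl (ne_of_gt hx))
    · intro x hx
      rw [interior_Ioi] at hx
      exact (hder x hx).differentiableAt.differentiableWithinAt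
    · intro x hx
      rw [interior_Ioi] at hx
      rw [(hder x hx).deriv]
      have hx' : (0:ℝ) < x := hx
      have h2 := (h.elliptic x hx).2
      have hxp : (0:ℝ) ≤ x ^ (-γ₂ - 1) := Real.rpow_nonneg hx'.le _
      have hxq : x ^ (-γ₂) = x * x ^ (-γ₂ - 1) := by
        rw [show -γ₂ = 1 + (-γ₂ - 1) by ring, Real.rpow_add hx', Real.rpow_one]
        ring_nf
      rw [hxq]
      nlinarith
  have key := hanti (mem_Ioi.2 hs) (mem_Ioi.2 hu) hsu
  simp only [hF] at key
  have hup : (0:ℝ) < u ^ γ₂ := Real.rpow_pos_of_pos hu _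
  have h1 : ρ' u = (ρ' u * u ^ (-γ₂)) * u ^ γ₂ := by
    rw [mul_assoc, ← Real.rpow_add hu]
    simp
  have h2 : (ρ' s * s ^ (-γ₂)) * u ^ γ₂ = (u / s) ^ γ₂ * ρ' s := by
    rw [Real.div_rpow hu.le hs.le, Real.rpow_neg hs.le]
    field_simp
  rw [h1, ← h2]
  exact mul_le_mul_of_nonneg_right key hup.le

lemma EN.E_bound (h : IsEllipticNFun ρ ρ' ρ'' γ₁ γ₂) {t : ℝ} (ht : 0 < t) :
    t * ρ' t ≤ 2 * (2:ℝ) ^ γ₂ * ρ t := by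
  have h2t : (0:ℝ) < t / 2 := by linarith
  have hpow : ρ' t ≤ (2:ℝ) ^ γ₂ * ρ' (t / 2) := by
    have := EN.pow_bound h h2t (by linarith : t / 2 ≤ t)
    have hq : t / (t / 2) = 2 := by field_simp
    rwa [hq] at this
  have hint1 : IntervalIntegrable ρ' volume 0 (t/2) :=
    (h.derivContinuousOn.mono (by rw [uIcc_of_le h2t.le]; exact Icc_subset_Ici_self)).intervalIntegrable
  have hint2 : IntervalIntegrable ρ' volume (t/2) t :=
    (h.derivContinuousOn.mono (by rw [uIcc_of_le (by linarith : t/2 ≤ t)]; exact fun x hx => le_trans h2t.le hx.1)).intervalIntegrable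
  have hsplit : (∫ τ in (0:ℝ)..(t/2), ρ' τ) + (∫ τ in (t/2)..t, ρ' τ) = ρ t := by
    rw [intervalIntegral.integral_add_adjacent_intervals hint1 hint2, EN.ftc h ht.le]
  have hlow : (t/2) * ρ' (t/2) ≤ ∫ τ in (t/2)..t, ρ' τ := by
    calc (t/2) * ρ' (t/2) = ∫ _ in (t/2)..t, ρ' (t/2) := by
          rw [intervalIntegral.integral_const, smul_eq_mul]; ring
      _ ≤ ∫ τ in (t/2)..t, ρ' τ := by
          apply intervalIntegral.integral_mono_on (by linarith) intervalIntegrable_const hint2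
          intro x hx
          exact EN.deriv_mono h (mem_Ici.2 h2t.le) (mem_Ici.2 (le_trans h2t.le hx.1)) hx.1
  have hup : ∀ x ∈ Icc (0:ℝ) (t/2), (0:ℝ) ≤ ρ' x := fun x hx => EN.deriv_nonneg h hx.1
  have h0 : (0:ℝ) ≤ ∫ τ in (0:ℝ)..(t/2), ρ' τ := intervalIntegral.integral_nonneg h2t.le hup
  have hPpos : (0:ℝ) < (2:ℝ) ^ γ₂ := Real.rpow_pos_of_pos (by norm_num) _
  nlinarith [EN.deriv_nonneg h h2t.le]


lemma EN.shift_nonneg (h : IsEllipticNFun ρ ρ' ρ'' γ₁ γ₂) {b t : ℝ} (hb : 0 ≤ b) (ht : 0 ≤ t) :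
    0 ≤ shift ρ' b t := by
  apply intervalIntegral.integral_nonneg ht
  intro x hx
  exact mul_nonneg (div_nonneg (EN.deriv_nonneg h (by linarith [hx.1])) (by linarith [hx.1])) hx.1

lemma EN.integrand_cont (h : IsEllipticNFun ρ ρ' ρ'' γ₁ γ₂) {b : ℝ} (hb : 0 < b) {s t : ℝ}
    (hs : 0 ≤ s) :
    ContinuousOn (fun τ => ρ' (b + τ) / (b + τ) * τ) (Icc s t) := by
  have c1 : ContinuousOn (fun τ : ℝ => ρ' (b + τ)) (Icc s t) := by
    apply h.derivContinuousOn.comp (continuous_const.add continuous_id).continuousOn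
    intro x hx
    simp only [mem_Ici, id_eq]
    have := le_trans hs hx.1
    show (0:ℝ) ≤ b + x
    linarith
  apply ContinuousOn.mul _ continuousOn_id
  apply c1.div (continuous_const.add continuous_id).continuousOn
  intro x hx
  have hx0 : (0:ℝ) ≤ x := le_trans hs hx.1
  have : (0:ℝ) < b + x := by linarith
  simpa using this.ne'

lemma EN.integrand_mono (h : IsEllipticNFun ρ ρ' ρ'' γ₁ γ₂) {b x y : ℝ} (hb : 0 < b)
    (hx : 0 ≤ x) (hxy : x ≤ y) :
    ρ' (b + x) / (b + x) * x ≤ ρ' (b + y) / (b + y) * y := by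
  have h1 : ρ' (b + x) ≤ ρ' (b + y) :=
    EN.deriv_mono h (mem_Ici.2 (by linarith)) (mem_Ici.2 (by linarith)) (by linarith)
  have h2 : x / (b + x) ≤ y / (b + y) := by
    rw [div_le_div_iff₀ (by linarith) (by linarith)]
    nlinarith
  have e1 : ρ' (b + x) / (b + x) * x = ρ' (b + x) * (x / (b + x)) := by ring
  have e2 : ρ' (b + y) / (b + y) * y = ρ' (b + y) * (y / (b + y)) := by ring
  rw [e1, e2]
  exact mul_le_mul h1 h2 (div_nonneg hx (by linarith)) (EN.deriv_nonneg h (by linarith))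

lemma EN.shift_upper (h : IsEllipticNFun ρ ρ' ρ'' γ₁ γ₂) {b t : ℝ} (hb : 0 < b) (ht : 0 ≤ t) :
    shift ρ' b t * (b + t) ≤ ρ' (b + t) * t * t := by
  have hle : shift ρ' b t ≤ t * (ρ' (b + t) / (b + t) * t) := by
    calc shift ρ' b t ≤ ∫ _ in (0:ℝ)..t, ρ' (b + t) / (b + t) * t := by
          apply intervalIntegral.integral_mono_on ht
            ((EN.integrand_cont h hb le_rfl).mono (by rw [uIcc_of_le ht])).intervalIntegrable
            intervalIntegrable_const
          intro x hx
          exact EN.integrand_mono h hb hx.1 hx.2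
      _ = t * (ρ' (b + t) / (b + t) * t) := by
          rw [intervalIntegral.integral_const, smul_eq_mul]; ring
  have heq : t * (ρ' (b + t) / (b + t) * t) * (b + t) = ρ' (b + t) * t * t := by
    field_simp
  calc shift ρ' b t * (b + t) ≤ t * (ρ' (b + t) / (b + t) * t) * (b + t) :=
        mul_le_mul_of_nonneg_right hle (by linarith)
    _ = ρ' (b + t) * t * t := heq

lemma EN.shift_lower (h : IsEllipticNFun ρ ρ' ρ'' γ₁ γ₂) {b t : ℝ} (hb : 0 < b) (ht : 0 ≤ t) :
    ρ' (b + t) * t * t ≤ 4 * (2:ℝ) ^ γ₂ * (shift ρ' b t * (b + t)) := by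
  have hP : (0:ℝ) < (2:ℝ) ^ γ₂ := Real.rpow_pos_of_pos (by norm_num) _
  have hint1 : IntervalIntegrable (fun τ => ρ' (b + τ) / (b + τ) * τ) volume 0 (t/2) :=
    ((EN.integrand_cont h hb le_rfl).mono (by rw [uIcc_of_le (by linarith : (0:ℝ) ≤ t/2)])).intervalIntegrable
  have hint2 : IntervalIntegrable (fun τ => ρ' (b + τ) / (b + τ) * τ) volume (t/2) t :=
    ((EN.integrand_cont h hb (by linarith : (0:ℝ) ≤ t/2)).mono (by rw [uIcc_of_le (by linarith : t/2 ≤ t)])).intervalIntegrable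
  have hsplit : (∫ τ in (0:ℝ)..(t/2), ρ' (b + τ) / (b + τ) * τ)
      + (∫ τ in (t/2)..t, ρ' (b + τ) / (b + τ) * τ) = shift ρ' b t :=
    intervalIntegral.integral_add_adjacent_intervals hint1 hint2
  have h0 : (0:ℝ) ≤ ∫ τ in (0:ℝ)..(t/2), ρ' (b + τ) / (b + τ) * τ := by
    apply intervalIntegral.integral_nonneg (by linarith)
    intro x hx
    exact mul_nonneg (div_nonneg (EN.deriv_nonneg h (by linarith [hx.1])) (by linarith [hx.1])) hx.1
  have hlow : (t/2) * (ρ' (b + t/2) / (b + t/2) * (t/2)) ≤ ∫ τ in (t/2)..t, ρ' (b + τ) / (b + τ) * τ := by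
    calc (t/2) * (ρ' (b + t/2) / (b + t/2) * (t/2))
        = ∫ _ in (t/2)..t, ρ' (b + t/2) / (b + t/2) * (t/2) := by
          rw [intervalIntegral.integral_const, smul_eq_mul]; ring
      _ ≤ ∫ τ in (t/2)..t, ρ' (b + τ) / (b + τ) * τ := by
          apply intervalIntegral.integral_mono_on (by linarith) intervalIntegrable_const hint2
          intro x hx
          exact EN.integrand_mono h hb (by linarith [hx.1]) hx.1
  have hS : (t/2) * (ρ' (b + t/2) / (b + t/2) * (t/2)) ≤ shift ρ' b t := by linarith
  have hSmul : (t/2) * (ρ' (b + t/2) / (b + t/2) * (t/2)) * (b + t/2) = t * t / 4 * ρ' (b + t/2) := by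
    field_simp
    ring
  have hS2 : t * t / 4 * ρ' (b + t/2) ≤ shift ρ' b t * (b + t/2) := by
    rw [← hSmul]
    exact mul_le_mul_of_nonneg_right hS (by linarith)
  have hpow2 : ρ' (b + t) ≤ (2:ℝ) ^ γ₂ * ρ' (b + t/2) := by
    have hp := EN.pow_bound h (show (0:ℝ) < b + t/2 by linarith) (show b + t/2 ≤ b + t by linarith)
    have hr : ((b + t) / (b + t/2)) ^ γ₂ ≤ (2:ℝ) ^ γ₂ := by
      apply Real.rpow_le_rpow (by positivity) _ (by linarith [h.gamma_pos, h.gamma_le])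
      rw [div_le_iff₀ (by linarith)]
      linarith
    calc ρ' (b + t) ≤ ((b + t) / (b + t/2)) ^ γ₂ * ρ' (b + t/2) := hp
      _ ≤ (2:ℝ) ^ γ₂ * ρ' (b + t/2) :=
        mul_le_mul_of_nonneg_right hr (EN.deriv_nonneg h (by linarith))
  have hSnn : 0 ≤ shift ρ' b t := EN.shift_nonneg h hb.le ht
  have hS3 : shift ρ' b t * (b + t/2) ≤ shift ρ' b t * (b + t) :=
    mul_le_mul_of_nonneg_left (by linarith) hSnn
  nlinarith [mul_le_mul_of_nonneg_right hpow2 (mul_nonneg ht ht), EN.deriv_nonneg h (show (0:ℝ) ≤ b + t/2 by linarith)]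


set_option maxHeartbeats 2000000 in
/-- Removal of shift: for an elliptic N-function `ρ` and every `δ > 0` there is `C_δ ≥ 1`,
depending only on `δ` and the characteristics of `ρ`, such that for all `a ∈ ℝ^d` and
`t ≥ 0` one has `ρ_{|a|}(t) ≤ C_δ ρ(t) + δ ρ(|a|)` and `ρ(t) ≤ C_δ ρ_{|a|}(t) + δ ρ(|a|)`. -/
theorem removal_of_shift (γ₁ γ₂ δ : ℝ) (hγ₁ : 0 < γ₁) (hγ : γ₁ ≤ γ₂) (hδ : 0 < δ) :
    ∃ C : ℝ, 1 ≤ C ∧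
      ∀ ρ ρ' ρ'' : ℝ → ℝ, IsEllipticNFun ρ ρ' ρ'' γ₁ γ₂ →
        ∀ (d : ℕ) (a : EuclideanSpace ℝ (Fin d)) (t : ℝ), 0 ≤ t →
          shift ρ' ‖a‖ t ≤ C * ρ t + δ * ρ ‖a‖ ∧
          ρ t ≤ C * shift ρ' ‖a‖ t + δ * ρ ‖a‖ := by
  have hγ₂ : 0 < γ₂ := lt_of_lt_of_le hγ₁ hγ
  obtain ⟨P, hPdef, hP1⟩ : ∃ P : ℝ, P = (2:ℝ) ^ γ₂ ∧ 1 ≤ P :=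
    ⟨(2:ℝ) ^ γ₂, rfl, Real.one_le_rpow (by norm_num) hγ₂.le⟩
  have hP0 : (0:ℝ) < P := by linarith
  obtain ⟨θ, hθ0, hθ1, hθδ, hθ2⟩ :
      ∃ θ : ℝ, 0 < θ ∧ θ ≤ 1 ∧ θ ≤ δ ∧ 2 * P ^ 2 * θ ^ 2 ≤ δ := by
    refine ⟨min (min 1 δ) (Real.sqrt (δ / (2 * P ^ 2))), ?_, ?_, ?_, ?_⟩
    · exact lt_min (lt_min one_pos hδ) (Real.sqrt_pos.2 (by positivity))
    · exact le_trans (min_le_left _ _) (min_le_left _ _)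
    · exact le_trans (min_le_left _ _) (min_le_right _ _)
    · have h1 : min (min 1 δ) (Real.sqrt (δ / (2 * P ^ 2))) ≤ Real.sqrt (δ / (2 * P ^ 2)) :=
        min_le_right _ _
      have h0 : 0 ≤ min (min 1 δ) (Real.sqrt (δ / (2 * P ^ 2))) :=
        le_min (le_min zero_le_one hδ.le) (Real.sqrt_nonneg _)
      have h2 : (min (min 1 δ) (Real.sqrt (δ / (2 * P ^ 2)))) ^ 2 ≤ δ / (2 * P ^ 2) := by
        calc (min (min 1 δ) (Real.sqrt (δ / (2 * P ^ 2)))) ^ 2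
            ≤ Real.sqrt (δ / (2 * P ^ 2)) ^ 2 := by nlinarith
          _ = δ / (2 * P ^ 2) := Real.sq_sqrt (by positivity)
      calc 2 * P ^ 2 * (min (min 1 δ) (Real.sqrt (δ / (2 * P ^ 2)))) ^ 2
          ≤ 2 * P ^ 2 * (δ / (2 * P ^ 2)) := by nlinarith
        _ = δ := by field_simp
  obtain ⟨K, hKdef, hK0⟩ : ∃ K : ℝ, K = (2 / θ) ^ γ₂ ∧ 0 < K :=
    ⟨(2 / θ) ^ γ₂, rfl, Real.rpow_pos_of_pos (by positivity) _⟩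
  obtain ⟨C, hC1, hCa, hCb⟩ : ∃ C : ℝ, 1 ≤ C ∧ K * (2 * P) ≤ C ∧ (2 / θ) * (4 * P) ≤ C :=
    ⟨max 1 (max (K * (2 * P)) ((2 / θ) * (4 * P))), le_max_left _ _,
      le_trans (le_max_left _ _) (le_max_right _ _),
      le_trans (le_max_right _ _) (le_max_right _ _)⟩
  have hC0 : (0:ℝ) < C := by linarith
  refine ⟨C, hC1, ?_⟩
  intro ρ ρ' ρ'' hρ d a t ht
  suffices H : ∀ b : ℝ, 0 ≤ b →
      (shift ρ' b t ≤ C * ρ t + δ * ρ b ∧ ρ t ≤ C * shift ρ' b t + δ * ρ b) from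
    H ‖a‖ (norm_nonneg a)
  intro b hb
  have hρb : 0 ≤ ρ b := EN.rho_nonneg hρ hb
  have hρt : 0 ≤ ρ t := EN.rho_nonneg hρ ht
  rcases eq_or_lt_of_le ht with h0 | ht0
  · -- t = 0
    have hsh : shift ρ' b 0 = 0 := intervalIntegral.integral_same
    rw [← h0, hsh, hρ.map_zero]
    constructor
    · nlinarith
    · nlinarith
  rcases eq_or_lt_of_le hb with hb0 | hb0
  · -- b = 0
    have hsh : shift ρ' b t = ρ t := by
      rw [← hb0]
      have hcong : (∫ τ in (0:ℝ)..t, ρ' (0 + τ) / (0 + τ) * τ) = ∫ τ in (0:ℝ)..t, ρ' τ := by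
        apply intervalIntegral.integral_congr_ae
        apply Filter.Eventually.of_forall
        intro x hx
        rw [uIoc_of_le ht] at hx
        have hx0 : 0 < x := hx.1
        rw [zero_add]
        field_simp
      rw [shift, hcong, EN.ftc hρ ht]
    rw [hsh, ← hb0, hρ.map_zero]
    constructor
    · nlinarith
    · nlinarith
  -- main case : 0 < b, 0 < t
  have hbt : (0:ℝ) < b + t := by linarith
  have hSnn : 0 ≤ shift ρ' b t := EN.shift_nonneg hρ hb ht
  have hU := EN.shift_upper hρ hb0 ht
  have hL : ρ' (b + t) * t * t ≤ 4 * P * (shift ρ' b t * (b + t)) := by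
    rw [hPdef]; exact EN.shift_lower hρ hb0 ht
  have hE : t * ρ' t ≤ 2 * P * ρ t := by rw [hPdef]; exact EN.E_bound hρ ht0
  have hD : ρ t ≤ t * ρ' t := EN.D_bound hρ ht
  have hd1 : 0 ≤ ρ' t := EN.deriv_nonneg hρ ht
  have hd2 : 0 ≤ ρ' (b + t) := EN.deriv_nonneg hρ (by linarith)
  have hd3 : 0 ≤ ρ' b := EN.deriv_nonneg hρ hb
  rcases le_total t (θ * b) with hc | hc
  · -- t ≤ θ b
    constructor
    · -- shift ≤ C ρ t + δ ρ b ; in fact shift ≤ δ ρ b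
      have hpb : ρ' (b + t) ≤ P * ρ' b := by
        have hp := EN.pow_bound hρ hb0 (show b ≤ b + t by linarith)
        have hr : ((b + t) / b) ^ γ₂ ≤ (2:ℝ) ^ γ₂ := by
          apply Real.rpow_le_rpow (by positivity) _ hγ₂.le
          rw [div_le_iff₀ hb0]
          nlinarith
        rw [hPdef]
        calc ρ' (b + t) ≤ ((b + t) / b) ^ γ₂ * ρ' b := hp
          _ ≤ (2:ℝ) ^ γ₂ * ρ' b := mul_le_mul_of_nonneg_right hr hd3
      have hEb : b * ρ' b ≤ 2 * P * ρ b := by rw [hPdef]; exact EN.E_bound hρ hb0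
      have w1 : t * t ≤ (θ * b) * (θ * b) := by nlinarith
      have w2 : ρ' (b + t) * (t * t) ≤ (P * ρ' b) * ((θ * b) * (θ * b)) :=
        mul_le_mul hpb w1 (by positivity) (by positivity)
      have w4 : P * θ ^ 2 * b * (b * ρ' b) ≤ P * θ ^ 2 * b * (2 * P * ρ b) :=
        mul_le_mul_of_nonneg_left hEb (by positivity)
      have w6 : (2 * P ^ 2 * θ ^ 2) * (b * ρ b) ≤ δ * (b * ρ b) :=
        mul_le_mul_of_nonneg_right hθ2 (mul_nonneg hb hρb)
      have hfin : shift ρ' b t * (b + t) ≤ (δ * ρ b) * (b + t) := by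
        nlinarith [mul_nonneg (mul_nonneg hδ.le hρb) ht]
      have hfin2 : shift ρ' b t ≤ δ * ρ b := (mul_le_mul_iff_of_pos_right hbt).1 hfin
      nlinarith
    · -- ρ t ≤ C shift + δ ρ b ; in fact ρ t ≤ δ ρ b
      have h1 : ρ t ≤ ρ (θ * b) :=
        hρ.strictMonoOn.monotoneOn (mem_Ici.2 ht) (mem_Ici.2 (by positivity)) hc
      have h2 : ρ (θ * b) ≤ θ * ρ b := by
        have hcx := hρ.convexOn.2 (mem_Ici.2 (le_refl (0:ℝ))) (mem_Ici.2 hb)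
          (by linarith : (0:ℝ) ≤ 1 - θ) hθ0.le (by ring)
        simp only [smul_eq_mul, mul_zero, hρ.map_zero, add_zero, zero_add] at hcx
        calc ρ (θ * b) = ρ ((1 - θ) * 0 + θ * b) := by ring_nf
          _ ≤ (1 - θ) * ρ 0 + θ * ρ b := hρ.convexOn.2 (mem_Ici.2 (le_refl (0:ℝ)))
              (mem_Ici.2 hb) (by linarith) hθ0.le (by ring)
          _ = θ * ρ b := by rw [hρ.map_zero]; ring
      nlinarith [mul_nonneg hC0.le hSnn]
  · -- θ b ≤ t
    have hkey : θ * (b + t) ≤ 2 * t := by nlinarith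
    constructor
    · -- shift ≤ C ρ t + δ ρ b ; in fact shift ≤ C ρ t
      have hpow : ρ' (b + t) ≤ K * ρ' t := by
        have hp := EN.pow_bound hρ ht0 (show t ≤ b + t by linarith)
        have hr : ((b + t) / t) ^ γ₂ ≤ (2 / θ) ^ γ₂ := by
          apply Real.rpow_le_rpow (by positivity) _ hγ₂.le
          rw [div_le_div_iff₀ ht0 hθ0]
          nlinarith
        rw [hKdef]
        calc ρ' (b + t) ≤ ((b + t) / t) ^ γ₂ * ρ' t := hp
          _ ≤ (2 / θ) ^ γ₂ * ρ' t := mul_le_mul_of_nonneg_right hr hd1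
      have w1 : ρ' (b + t) * (t * t) ≤ (K * ρ' t) * (t * t) :=
        mul_le_mul_of_nonneg_right hpow (by positivity)
      have w2 : (K * t) * (t * ρ' t) ≤ (K * t) * (2 * P * ρ t) :=
        mul_le_mul_of_nonneg_left hE (by positivity)
      have w3 : (K * (2 * P)) * (ρ t * t) ≤ C * (ρ t * t) :=
        mul_le_mul_of_nonneg_right hCa (by positivity)
      have w4 : (C * ρ t) * t ≤ (C * ρ t) * (b + t) :=
        mul_le_mul_of_nonneg_left (by linarith) (by positivity)
      have hfin : shift ρ' b t * (b + t) ≤ (C * ρ t) * (b + t) := by nlinarith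
      have hfin2 : shift ρ' b t ≤ C * ρ t := (mul_le_mul_iff_of_pos_right hbt).1 hfin
      nlinarith [mul_nonneg hδ.le hρb]
    · -- ρ t ≤ C shift + δ ρ b ; in fact ρ t ≤ C shift
      have w2 : ρ' t ≤ ρ' (b + t) :=
        EN.deriv_mono hρ (mem_Ici.2 ht) (mem_Ici.2 (by linarith)) (by linarith)
      have p1 : ρ t * (b + t) ≤ (t * ρ' t) * (b + t) := mul_le_mul_of_nonneg_right hD hbt.le
      have p2 : (t * ρ' t) * (b + t) ≤ (t * ρ' (b + t)) * (b + t) :=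
        mul_le_mul_of_nonneg_right (mul_le_mul_of_nonneg_left w2 ht) hbt.le
      have p3 : (t * ρ' (b + t)) * (θ * (b + t)) ≤ (t * ρ' (b + t)) * (2 * t) :=
        mul_le_mul_of_nonneg_left hkey (mul_nonneg ht hd2)
      have p5 : 8 * P ≤ θ * C := by
        have h8 : θ * ((2 / θ) * (4 * P)) = 8 * P := by field_simp; ring
        calc 8 * P = θ * ((2 / θ) * (4 * P)) := h8.symm
          _ ≤ θ * C := mul_le_mul_of_nonneg_left hCb hθ0.le
      have p6 : (8 * P) * (shift ρ' b t * (b + t)) ≤ (θ * C) * (shift ρ' b t * (b + t)) :=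
        mul_le_mul_of_nonneg_right p5 (mul_nonneg hSnn hbt.le)
      have q1 : θ * (ρ t * (b + t)) ≤ θ * ((t * ρ' t) * (b + t)) :=
        mul_le_mul_of_nonneg_left p1 hθ0.le
      have q2 : θ * ((t * ρ' t) * (b + t)) ≤ θ * ((t * ρ' (b + t)) * (b + t)) :=
        mul_le_mul_of_nonneg_left p2 hθ0.le
      have q4 : θ * (ρ t * (b + t)) ≤ θ * ((C * shift ρ' b t) * (b + t)) := by nlinarith [hL]
      have q5 : ρ t * (b + t) ≤ (C * shift ρ' b t) * (b + t) :=
        le_of_mul_le_mul_left q4 hθ0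
      have hfin2 : ρ t ≤ C * shift ρ' b t := (mul_le_mul_iff_of_pos_right hbt).1 q5
      nlinarith [mul_nonneg hδ.le hρb]
end
end

section
/- Let ρ be an elliptic N-function. Then there exists c ≥ 1, depending only on the characteristics of ρ, such that: (i) for all a, t ≥ 0, c⁻¹ (ρ*)_{ρ'(a)}(t) ≤ (ρ_a)*(t) ≤ c (ρ*)_{ρ'(a)}(t); and (ii) for all a ≥ 0 and all λ ∈ [0,1], c⁻¹ λ² ρ(a) ≤ ρ_a(λ a) ≤ c λ² ρ(a) and c⁻¹ λ² ρ(a) ≤ (ρ_a)*(λ ρ'(a)) ≤ c λ² ρ(a). -/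
open MeasureTheory Set Filter

noncomputable section

namespace EllipticAux
open Real

variable {γ₁ γ₂ : ℝ} {ρ ρ' ρ'' : ℝ → ℝ}

section Basic
variable (H : IsEllipticNFun ρ ρ' ρ'' γ₁ γ₂)
include H

lemma rho_nonneg {t : ℝ} (ht : 0 ≤ t) : 0 ≤ ρ t := by
  rcases eq_or_lt_of_le ht with h | h
  · simp [← h, H.map_zero]
  · simpa [H.map_zero] using (H.strictMonoOn (by simp) ht h).le

lemma deriv_at_pos {t : ℝ} (ht : 0 < t) : HasDerivAt ρ (ρ' t) t :=
  (H.hasDerivAt t ht.le).hasDerivAt (Ici_mem_nhds ht)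

lemma rho'_zero : ρ' 0 = 0 := by
  have h1 : Tendsto (slope ρ 0) (nhdsWithin 0 ((Set.Ici 0) \ {0})) (nhds (ρ' 0)) :=
    hasDerivWithinAt_iff_tendsto_slope.1 (H.hasDerivAt 0 (Set.mem_Ici.2 le_rfl))
  have hs : (Set.Ici (0:ℝ)) \ {0} = Set.Ioi 0 := by
    ext x; simp [Set.mem_diff, lt_iff_le_and_ne, eq_comm, and_comm]
  rw [hs] at h1
  have h2 : Tendsto (slope ρ 0) (nhdsWithin 0 (Set.Ioi 0)) (nhds 0) := by
    apply H.tendsto_zero.congr'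
    filter_upwards [self_mem_nhdsWithin] with x hx
    simp [slope_def_field, H.map_zero, div_eq_div_iff]
  exact tendsto_nhds_unique h1 h2

lemma rho'_nonneg {t : ℝ} (ht : 0 ≤ t) : 0 ≤ ρ' t := by
  rcases eq_or_lt_of_le ht with h | h
  · simp [← h, rho'_zero H]
  · -- derivative of monotone function
    have := H.hasDerivAt t ht
    have hmono : MonotoneOn ρ (Set.Ici 0) := H.strictMonoOn.monotoneOn
    have h1 : Tendsto (slope ρ t) (nhdsWithin t ((Set.Ici 0) \ {t})) (nhds (ρ' t)) :=
      hasDerivWithinAt_iff_tendsto_slope.1 (H.hasDerivAt t ht)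
    have h2 : ∀ᶠ x in nhdsWithin t ((Set.Ici 0) \ {t}), 0 ≤ slope ρ t x := by
      filter_upwards [self_mem_nhdsWithin] with x hx
      have hxt : x ≠ t := hx.2
      rw [slope_def_field]
      rcases lt_or_gt_of_ne hxt with hlt | hgt
      · exact div_nonneg_iff.2 (Or.inr ⟨sub_nonpos.2 (hmono hx.1 ht hlt.le), by linarith⟩)
      · exact div_nonneg (sub_nonneg.2 (hmono ht hx.1 hgt.le)) (by linarith)
    haveI hne : (nhdsWithin t ((Set.Ici 0) \ {t})).NeBot := by
      apply Filter.NeBot.mono (nhdsGT_neBot t) (nhdsWithin_mono t ?_)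
      exact fun x hx => ⟨le_trans ht (le_of_lt hx), ne_of_gt hx⟩
    exact ge_of_tendsto h1 h2

lemma rho''_nonneg {t : ℝ} (ht : 0 < t) : 0 ≤ ρ'' t := by
  have h := (H.elliptic t ht).1
  have h2 : 0 ≤ γ₁ * ρ' t := mul_nonneg H.gamma_pos.le (rho'_nonneg H ht.le)
  nlinarith

lemma rho'_monotoneOn : MonotoneOn ρ' (Set.Ici 0) := by
  apply monotoneOn_of_hasDerivWithinAt_nonneg (convex_Ici 0) H.derivContinuousOn
    (f' := ρ'') ?_ ?_
  · intro x hx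
    rw [interior_Ici] at hx ⊢
    exact (H.hasDeriv2At x hx).hasDerivWithinAt
  · intro x hx
    rw [interior_Ici] at hx
    exact rho''_nonneg H hx

lemma rho'_pos {t : ℝ} (ht : 0 < t) : 0 < ρ' t := by
  obtain ⟨ξ, hξ, hd⟩ := exists_hasDerivAt_eq_slope ρ ρ' ht
    (H.continuousOn.mono (fun x (hx : x ∈ Set.Icc 0 t) => hx.1))
    (fun x hx => deriv_at_pos H hx.1)
  have hρt : 0 < ρ t := by
    have := H.strictMonoOn (Set.mem_Ici.2 le_rfl) (Set.mem_Ici.2 ht.le) ht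
    simpa [H.map_zero] using this
  have hslope : 0 < ρ' ξ := by
    rw [hd, H.map_zero, sub_zero, sub_zero]
    positivity
  exact lt_of_lt_of_le hslope (rho'_monotoneOn H hξ.1.le (le_trans hξ.1.le hξ.2.le) hξ.2.le)

lemma rho''_pos {t : ℝ} (ht : 0 < t) : 0 < ρ'' t := by
  have h := (H.elliptic t ht).1
  have h2 : 0 < γ₁ * ρ' t := mul_pos H.gamma_pos (rho'_pos H ht)
  nlinarith

lemma rho'_strictMonoOn : StrictMonoOn ρ' (Set.Ici 0) := by
  apply strictMonoOn_of_hasDerivWithinAt_pos (convex_Ici 0) H.derivContinuousOn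
    (f' := ρ'') ?_ ?_
  · intro x hx
    rw [interior_Ici] at hx ⊢
    exact (H.hasDeriv2At x hx).hasDerivWithinAt
  · intro x hx
    rw [interior_Ici] at hx
    exact rho''_pos H hx

lemma rho'_rpow_bounds {s t : ℝ} (hs : 0 < s) (hst : s ≤ t) :
    ρ' s * (t/s) ^ γ₁ ≤ ρ' t ∧ ρ' t ≤ ρ' s * (t/s) ^ γ₂ := by
  have ht : 0 < t := lt_of_lt_of_le hs hst
  have hcont : ∀ γ : ℝ, ContinuousOn (fun x => Real.log (ρ' x) - γ * Real.log x) (Set.Ioi 0) := by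
    intro γ
    apply ContinuousOn.sub
    · exact ((H.derivContinuousOn.mono (Set.Ioi_subset_Ici le_rfl)).log
        (fun x hx => (rho'_pos H hx).ne'))
    · exact (Real.continuousOn_log.mono (fun x hx => ne_of_gt hx)).const_smul γ |>.congr
        (fun x hx => by simp [smul_eq_mul])
  have hderiv : ∀ γ : ℝ, ∀ x ∈ Set.Ioi (0:ℝ),
      HasDerivAt (fun x => Real.log (ρ' x) - γ * Real.log x) (ρ'' x / ρ' x - γ / x) x := by
    intro γ x hx
    have h1 : HasDerivAt (fun x => Real.log (ρ' x)) (ρ'' x / ρ' x) x :=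
      (H.hasDeriv2At x hx).log (rho'_pos H hx).ne'
    have h2 : HasDerivAt (fun x => γ * Real.log x) (γ * x⁻¹) x :=
      (Real.hasDerivAt_log (ne_of_gt hx)).const_mul γ
    simpa [div_eq_mul_inv, Pi.sub_def] using h1.sub h2
  have hm1 : MonotoneOn (fun x => Real.log (ρ' x) - γ₁ * Real.log x) (Set.Ioi 0) := by
    apply monotoneOn_of_hasDerivWithinAt_nonneg (convex_Ioi 0) (hcont γ₁)
      (f' := fun x => ρ'' x / ρ' x - γ₁ / x) ?_ ?_
    · intro x hx; rw [interior_Ioi] at hx ⊢; exact (hderiv γ₁ x hx).hasDerivWithinAt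
    · intro x hx
      rw [interior_Ioi] at hx
      have hρ := rho'_pos H hx
      have h := (H.elliptic x hx).1
      rw [sub_nonneg, div_le_div_iff₀ hx hρ]
      nlinarith
  have hm2 : AntitoneOn (fun x => Real.log (ρ' x) - γ₂ * Real.log x) (Set.Ioi 0) := by
    apply antitoneOn_of_hasDerivWithinAt_nonpos (convex_Ioi 0) (hcont γ₂)
      (f' := fun x => ρ'' x / ρ' x - γ₂ / x) ?_ ?_
    · intro x hx; rw [interior_Ioi] at hx ⊢; exact (hderiv γ₂ x hx).hasDerivWithinAt
    · intro x hx
      rw [interior_Ioi] at hx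
      have hρ := rho'_pos H hx
      have h := (H.elliptic x hx).2
      rw [sub_nonpos, div_le_div_iff₀ hρ hx]
      nlinarith
  have hρs := rho'_pos H hs
  have hρt := rho'_pos H ht
  have hts : 0 < t / s := div_pos ht hs
  constructor
  · have := hm1 (Set.mem_Ioi.2 hs) (Set.mem_Ioi.2 ht) hst
    simp only at this
    have key : Real.log (ρ' s) + γ₁ * (Real.log t - Real.log s) ≤ Real.log (ρ' t) := by
      nlinarith
    calc ρ' s * (t/s) ^ γ₁ = Real.exp (Real.log (ρ' s) + γ₁ * (Real.log t - Real.log s)) := by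
          rw [Real.exp_add, Real.exp_log hρs, ← Real.log_div (ne_of_gt ht) (ne_of_gt hs),
            ← Real.log_rpow hts, Real.exp_log (Real.rpow_pos_of_pos hts _)]
      _ ≤ Real.exp (Real.log (ρ' t)) := Real.exp_le_exp.2 key
      _ = ρ' t := Real.exp_log hρt
  · have := hm2 (Set.mem_Ioi.2 hs) (Set.mem_Ioi.2 ht) hst
    simp only at this
    have key : Real.log (ρ' t) ≤ Real.log (ρ' s) + γ₂ * (Real.log t - Real.log s) := by
      nlinarith
    calc ρ' t = Real.exp (Real.log (ρ' t)) := (Real.exp_log hρt).symm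
      _ ≤ Real.exp (Real.log (ρ' s) + γ₂ * (Real.log t - Real.log s)) := Real.exp_le_exp.2 key
      _ = ρ' s * (t/s) ^ γ₂ := by
          rw [Real.exp_add, Real.exp_log hρs, ← Real.log_div (ne_of_gt ht) (ne_of_gt hs),
            ← Real.log_rpow hts, Real.exp_log (Real.rpow_pos_of_pos hts _)]

lemma rho'_scale_ge {x lam : ℝ} (hx : 0 < x) (hl : 1 ≤ lam) :
    lam ^ γ₁ * ρ' x ≤ ρ' (lam * x) := by
  have h := (rho'_rpow_bounds H hx (le_mul_of_one_le_left hx.le hl)).1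
  rw [mul_div_assoc, div_self (ne_of_gt hx), mul_one] at h
  linarith [h]

lemma rho'_scale_le {x lam : ℝ} (hx : 0 < x) (hl : 1 ≤ lam) :
    ρ' (lam * x) ≤ lam ^ γ₂ * ρ' x := by
  have h := (rho'_rpow_bounds H hx (le_mul_of_one_le_left hx.le hl)).2
  rw [mul_div_assoc, div_self (ne_of_gt hx), mul_one] at h
  linarith [h]

lemma rho'_scale_small {x lam : ℝ} (hx : 0 < x) (hl0 : 0 < lam) (hl : lam ≤ 1) :
    ρ' (lam * x) ≤ lam ^ γ₁ * ρ' x := by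
  have hlx : 0 < lam * x := mul_pos hl0 hx
  have h := rho'_scale_ge H (x := lam * x) (lam := lam⁻¹) hlx (one_le_inv_iff₀.2 ⟨hl0, hl⟩)
  rw [inv_mul_cancel_left₀ (ne_of_gt hl0)] at h
  have hp : 0 < (lam:ℝ) ^ γ₁ := Real.rpow_pos_of_pos hl0 _
  have hip : (lam⁻¹) ^ γ₁ = (lam ^ γ₁)⁻¹ := Real.inv_rpow hl0.le γ₁
  rw [hip] at h
  calc ρ' (lam * x) = lam ^ γ₁ * ((lam ^ γ₁)⁻¹ * ρ' (lam*x)) := by field_simp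
    _ ≤ lam ^ γ₁ * ρ' x := by
        apply mul_le_mul_of_nonneg_left _ hp.le
        exact h


lemma rho_le_mul {t : ℝ} (ht : 0 ≤ t) : ρ t ≤ t * ρ' t := by
  have hmono : MonotoneOn (fun x => x * ρ' x - ρ x) (Set.Ici 0) := by
    apply monotoneOn_of_hasDerivWithinAt_nonneg (convex_Ici 0)
      (f' := fun x => x * ρ'' x) ?_ ?_ ?_
    · exact ((continuousOn_id.mul H.derivContinuousOn).sub H.continuousOn)
    · intro x hx
      rw [interior_Ici] at hx ⊢
      have h1 : HasDerivAt (fun x => x * ρ' x) (1 * ρ' x + x * ρ'' x) x :=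
        (hasDerivAt_id x).mul (H.hasDeriv2At x hx)
      have h2 := (h1.sub (deriv_at_pos H hx))
      simpa [Pi.sub_def] using h2.hasDerivWithinAt
    · intro x hx
      rw [interior_Ici] at hx
      exact mul_nonneg hx.le (rho''_nonneg H hx)
  have := hmono (Set.mem_Ici.2 le_rfl) (Set.mem_Ici.2 ht) ht
  simp only [H.map_zero, zero_mul, sub_zero, sub_self] at this
  linarith [this]

lemma mul_le_rho {t : ℝ} (ht : 0 ≤ t) : t * ρ' t ≤ (1 + γ₂) * ρ t := by
  have hmono : MonotoneOn (fun x => (1 + γ₂) * ρ x - x * ρ' x) (Set.Ici 0) := by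
    apply monotoneOn_of_hasDerivWithinAt_nonneg (convex_Ici 0)
      (f' := fun x => γ₂ * ρ' x - x * ρ'' x) ?_ ?_ ?_
    · exact ((H.continuousOn.const_smul (1+γ₂)).congr (fun x _ => by simp [smul_eq_mul])).sub
        (continuousOn_id.mul H.derivContinuousOn)
    · intro x hx
      rw [interior_Ici] at hx ⊢
      have h1 : HasDerivAt (fun x => x * ρ' x) (1 * ρ' x + x * ρ'' x) x :=
        (hasDerivAt_id x).mul (H.hasDeriv2At x hx)
      have h2 := ((deriv_at_pos H hx).const_mul (1+γ₂)).sub h1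
      have : (1 + γ₂) * ρ' x - (1 * ρ' x + x * ρ'' x) = γ₂ * ρ' x - x * ρ'' x := by ring
      rw [this] at h2
      exact h2.hasDerivWithinAt
    · intro x hx
      rw [interior_Ici] at hx
      have := (H.elliptic x hx).2
      linarith
  have := hmono (Set.mem_Ici.2 le_rfl) (Set.mem_Ici.2 ht) ht
  simp only [H.map_zero, zero_mul, sub_zero, mul_zero, sub_self] at this
  linarith [this]

lemma tangent {x y : ℝ} (hx : 0 ≤ x) (hy : 0 ≤ y) : ρ' x * (y - x) ≤ ρ y - ρ x := by
  rcases le_total x y with hxy | hxy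
  · have hmono : MonotoneOn (fun s => ρ s - ρ' x * s) (Set.Ici x) := by
      apply monotoneOn_of_hasDerivWithinAt_nonneg (convex_Ici x)
        (f' := fun s => ρ' s - ρ' x) ?_ ?_ ?_
      · exact (H.continuousOn.mono (Set.Ici_subset_Ici.2 hx)).sub
          (continuousOn_const.mul continuousOn_id)
      · intro s hs
        rw [interior_Ici] at hs ⊢
        exact ((deriv_at_pos H (lt_of_le_of_lt hx hs)).sub
          ((hasDerivAt_id s).const_mul (ρ' x) |>.congr_deriv (by simp))).hasDerivWithinAt
      · intro s hs
        rw [interior_Ici] at hs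
        have := rho'_monotoneOn H (Set.mem_Ici.2 hx) (Set.mem_Ici.2 (le_trans hx hs.le)) hs.le
        linarith
    have := hmono (Set.mem_Ici.2 le_rfl) (Set.mem_Ici.2 hxy) hxy
    simp only at this
    nlinarith
  · have hanti : AntitoneOn (fun s => ρ s - ρ' x * s) (Set.Icc 0 x) := by
      apply antitoneOn_of_hasDerivWithinAt_nonpos (convex_Icc 0 x)
        (f' := fun s => ρ' s - ρ' x) ?_ ?_ ?_
      · exact (H.continuousOn.mono (fun s (hs : s ∈ Set.Icc 0 x) => hs.1)).sub
          (continuousOn_const.mul continuousOn_id)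
      · intro s hs
        rw [interior_Icc] at hs ⊢
        exact ((deriv_at_pos H hs.1).sub
          ((hasDerivAt_id s).const_mul (ρ' x) |>.congr_deriv (by simp))).hasDerivWithinAt
      · intro s hs
        rw [interior_Icc] at hs
        have := rho'_monotoneOn H (Set.mem_Ici.2 hs.1.le) (Set.mem_Ici.2 hx) hs.2.le
        linarith
    have := hanti (Set.mem_Icc.2 ⟨hy, hxy⟩) (Set.mem_Icc.2 ⟨hx, le_rfl⟩) hxy
    simp only at this
    nlinarith

lemma rho'_tendsto_atTop : Tendsto ρ' atTop atTop := by
  have h1 : Tendsto (fun t => t / ρ t) atTop (nhdsWithin 0 (Set.Ioi 0)) := by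
    apply tendsto_nhdsWithin_of_tendsto_nhds_of_eventually_within _ H.tendsto_atTop
    filter_upwards [eventually_ge_atTop (1:ℝ)] with t ht
    have h2 : 0 < ρ t := by
      have := H.strictMonoOn (Set.mem_Ici.2 le_rfl) (Set.mem_Ici.2 (by linarith : (0:ℝ) ≤ t))
        (by linarith)
      simpa [H.map_zero] using this
    exact div_pos (by linarith) h2
  have h2 : Tendsto (fun t => ρ t / t) atTop atTop := by
    have := h1.inv_tendsto_nhdsGT_zero
    apply this.congr
    intro t; simp [inv_div]
  apply tendsto_atTop_mono' _ _ h2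
  filter_upwards [eventually_gt_atTop (0:ℝ)] with t ht
  exact (div_le_iff₀ ht).2 (by linarith [rho_le_mul H ht.le])

lemma rho'_surj {y : ℝ} (hy : 0 ≤ y) : ∃ x ∈ Set.Ici (0:ℝ), ρ' x = y := by
  obtain ⟨X, hyX, hX0⟩ :=
    (((rho'_tendsto_atTop H).eventually_ge_atTop y).and (eventually_ge_atTop (0:ℝ))).exists
  have hsub : Set.Icc (0:ℝ) X ⊆ Set.Ici 0 := fun x hx => hx.1
  have := intermediate_value_Icc hX0 (H.derivContinuousOn.mono hsub)
  rw [rho'_zero H] at this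
  obtain ⟨x, hx, hxy⟩ := this (Set.mem_Icc.2 ⟨hy, hyX⟩)
  exact ⟨x, hx.1, hxy⟩


end Basic

def phi (ρ' : ℝ → ℝ) : ℝ → ℝ := Function.invFunOn ρ' (Set.Ici 0)

section Phi
variable (H : IsEllipticNFun ρ ρ' ρ'' γ₁ γ₂)
include H

lemma phi_mem {y : ℝ} (hy : 0 ≤ y) : phi ρ' y ∈ Set.Ici 0 :=
  Function.invFunOn_mem (rho'_surj H hy)

lemma phi_nonneg {y : ℝ} (hy : 0 ≤ y) : 0 ≤ phi ρ' y := phi_mem H hy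

lemma rho'_phi {y : ℝ} (hy : 0 ≤ y) : ρ' (phi ρ' y) = y :=
  Function.invFunOn_eq (rho'_surj H hy)

lemma phi_rho' {x : ℝ} (hx : 0 ≤ x) : phi ρ' (ρ' x) = x :=
  (rho'_strictMonoOn H).injOn (phi_mem H (rho'_nonneg H hx)) hx
    (rho'_phi H (rho'_nonneg H hx))

lemma phi_zero : phi ρ' 0 = 0 := by
  have := phi_rho' H (le_refl (0:ℝ))
  rwa [rho'_zero H] at this

lemma phi_pos {y : ℝ} (hy : 0 < y) : 0 < phi ρ' y := by
  rcases eq_or_lt_of_le (phi_nonneg H hy.le) with h | h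
  · exfalso
    have := rho'_phi H hy.le
    rw [← h, rho'_zero H] at this
    linarith
  · exact h

lemma le_phi {x y : ℝ} (hx : 0 ≤ x) (hy : 0 ≤ y) (h : ρ' x ≤ y) : x ≤ phi ρ' y := by
  by_contra hc
  push_neg at hc
  have := rho'_strictMonoOn H (phi_mem H hy) hx hc
  rw [rho'_phi H hy] at this
  linarith

lemma phi_le {x y : ℝ} (hx : 0 ≤ x) (hy : 0 ≤ y) (h : y ≤ ρ' x) : phi ρ' y ≤ x := by
  by_contra hc
  push_neg at hc
  have := rho'_strictMonoOn H hx (phi_mem H hy) hc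
  rw [rho'_phi H hy] at this
  linarith

lemma phi_mono {y₁ y₂ : ℝ} (h1 : 0 ≤ y₁) (h : y₁ ≤ y₂) : phi ρ' y₁ ≤ phi ρ' y₂ :=
  le_phi H (phi_nonneg H h1) (le_trans h1 h) (by rw [rho'_phi H h1]; exact h)

lemma phi_scale {y lam : ℝ} (hy : 0 ≤ y) (hl : 1 ≤ lam) :
    phi ρ' (lam * y) ≤ lam ^ (1/γ₁) * phi ρ' y := by
  rcases eq_or_lt_of_le hy with h | h
  · rw [← h, mul_zero]
    simp [phi_zero H]
  · have hx : 0 < phi ρ' y := phi_pos H h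
    have hl0 : (0:ℝ) < lam := lt_of_lt_of_le one_pos hl
    have hpow : 1 ≤ lam ^ (1/γ₁) := Real.one_le_rpow hl (by have := H.gamma_pos; positivity)
    apply phi_le H (mul_nonneg (by positivity) hx.le) (by positivity)
    calc lam * y = lam * ρ' (phi ρ' y) := by rw [rho'_phi H hy]
      _ ≤ (lam ^ (1/γ₁)) ^ γ₁ * ρ' (phi ρ' y) := by
          apply mul_le_mul_of_nonneg_right _ (rho'_nonneg H hx.le)
          rw [← Real.rpow_mul hl0.le, one_div, inv_mul_cancel₀ (ne_of_gt H.gamma_pos),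
            Real.rpow_one]
      _ ≤ ρ' (lam ^ (1/γ₁) * phi ρ' y) := rho'_scale_ge H hx hpow

lemma conj_rho_isGreatest {y : ℝ} (hy : 0 ≤ y) :
    IsGreatest ((fun s => s * y - ρ s) '' Set.Ici 0) (phi ρ' y * y - ρ (phi ρ' y)) := by
  constructor
  · exact ⟨phi ρ' y, phi_mem H hy, rfl⟩
  · rintro z ⟨s, hs, rfl⟩
    have ht := tangent H (phi_nonneg H hy) hs
    rw [rho'_phi H hy] at ht
    dsimp only
    nlinarith [ht]

lemma conj_rho_eq {y : ℝ} (hy : 0 ≤ y) :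
    conj ρ y = phi ρ' y * y - ρ (phi ρ' y) :=
  (conj_rho_isGreatest H hy).csSup_eq

lemma conj_rho_slope {y₁ y₂ : ℝ} (h1 : 0 ≤ y₁) (h2 : 0 ≤ y₂) :
    phi ρ' y₁ * (y₂ - y₁) ≤ conj ρ y₂ - conj ρ y₁ := by
  have hg := conj_rho_isGreatest H h2
  have hle := hg.2 ⟨phi ρ' y₁, phi_mem H h1, rfl⟩
  rw [conj_rho_eq H h1, conj_rho_eq H h2]
  dsimp only at hle
  linarith

lemma phi_continuousAt {y : ℝ} (hy : 0 < y) : ContinuousAt (phi ρ') y := by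
  rw [ContinuousAt]
  apply tendsto_order.2
  constructor
  · intro l hl
    rcases lt_or_ge l 0 with h0 | h0
    · filter_upwards [eventually_gt_nhds hy] with z hz
      exact lt_of_lt_of_le h0 (phi_nonneg H hz.le)
    · have hly : ρ' l < y := by
        have := rho'_strictMonoOn H (Set.mem_Ici.2 h0) (phi_mem H hy.le) hl
        rwa [rho'_phi H hy.le] at this
      filter_upwards [eventually_gt_nhds hly, eventually_gt_nhds hy] with z hz hz0
      by_contra hc
      push_neg at hc
      have := rho'_monotoneOn H (phi_mem H hz0.le) (Set.mem_Ici.2 h0) hc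
      rw [rho'_phi H hz0.le] at this
      linarith
  · intro u hu
    have hu0 : 0 ≤ u := le_trans (phi_nonneg H hy.le) hu.le
    have hyu : y < ρ' u := by
      have := rho'_strictMonoOn H (phi_mem H hy.le) (Set.mem_Ici.2 hu0) hu
      rwa [rho'_phi H hy.le] at this
    filter_upwards [eventually_lt_nhds hyu, eventually_gt_nhds hy] with z hz hz0
    by_contra hc
    push_neg at hc
    have := rho'_monotoneOn H (Set.mem_Ici.2 hu0) (phi_mem H hz0.le) hc
    rw [rho'_phi H hz0.le] at this
    linarith

lemma phi_continuousOn : ContinuousOn (phi ρ') (Set.Ici 0) := by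
  intro y hy
  rcases eq_or_lt_of_le (Set.mem_Ici.1 hy) with h | h
  · rw [ContinuousWithinAt, ← h, phi_zero H]
    apply tendsto_order.2
    constructor
    · intro l hl
      filter_upwards [self_mem_nhdsWithin] with z hz
      exact lt_of_lt_of_le hl (phi_nonneg H hz)
    · intro u hu
      have hru : 0 < ρ' u := rho'_pos H hu
      filter_upwards [nhdsWithin_le_nhds (eventually_lt_nhds hru), self_mem_nhdsWithin]
        with z hz hz0
      by_contra hc
      push_neg at hc
      have := rho'_monotoneOn H (Set.mem_Ici.2 hu.le) (phi_mem H hz0) hc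
      rw [rho'_phi H hz0] at this
      linarith
  · exact (phi_continuousAt H h).continuousWithinAt

lemma conj_hasDerivAt {y : ℝ} (hy : 0 < y) : HasDerivAt (conj ρ) (phi ρ' y) y := by
  rw [hasDerivAt_iff_tendsto_slope]
  have hcont : Tendsto (phi ρ') (nhdsWithin y {y}ᶜ) (nhds (phi ρ' y)) :=
    (phi_continuousAt H hy).continuousWithinAt
  have hmin : Tendsto (fun z => min (phi ρ' z) (phi ρ' y)) (nhdsWithin y {y}ᶜ)
      (nhds (phi ρ' y)) := by
    have := hcont.min (tendsto_const_nhds (x := phi ρ' y))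
    simpa using this
  have hmax : Tendsto (fun z => max (phi ρ' z) (phi ρ' y)) (nhdsWithin y {y}ᶜ)
      (nhds (phi ρ' y)) := by
    have := hcont.max (tendsto_const_nhds (x := phi ρ' y))
    simpa using this
  apply tendsto_of_tendsto_of_tendsto_of_le_of_le' hmin hmax
  · filter_upwards [nhdsWithin_le_nhds (eventually_gt_nhds hy), self_mem_nhdsWithin]
      with z hz0 hzny
    have hzy : z ≠ y := hzny
    rw [slope_def_field]
    rcases lt_or_gt_of_ne hzy with hlt | hgt
    · have h2 := conj_rho_slope H hz0.le hy.le
      refine le_trans (min_le_left _ _) ?_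
      rw [le_div_iff_of_neg (by linarith : z - y < 0)]
      nlinarith [h2]
    · have h1 := conj_rho_slope H hy.le hz0.le
      refine le_trans (min_le_right _ _) ?_
      rw [le_div_iff₀ (by linarith : 0 < z - y)]
      nlinarith [h1]
  · filter_upwards [nhdsWithin_le_nhds (eventually_gt_nhds hy), self_mem_nhdsWithin]
      with z hz0 hzny
    have hzy : z ≠ y := hzny
    rw [slope_def_field]
    rcases lt_or_gt_of_ne hzy with hlt | hgt
    · have h1 := conj_rho_slope H hy.le hz0.le
      refine le_trans ?_ (le_max_right _ _)
      rw [div_le_iff_of_neg (by linarith : z - y < 0)]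
      nlinarith [h1]
    · have h2 := conj_rho_slope H hz0.le hy.le
      refine le_trans ?_ (le_max_left _ _)
      rw [div_le_iff₀ (by linarith : 0 < z - y)]
      nlinarith [h2]

lemma conj_deriv {y : ℝ} (hy : 0 < y) : deriv (conj ρ) y = phi ρ' y :=
  (conj_hasDerivAt H hy).deriv

end Phi

section Shift
variable {g : ℝ → ℝ} {a : ℝ}

lemma shiftD_nonneg (hg : ∀ x, 0 ≤ x → 0 ≤ g x) (ha : 0 ≤ a) {τ : ℝ} (hτ : 0 ≤ τ) :
    0 ≤ shiftD g a τ :=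
  mul_nonneg (div_nonneg (hg _ (by linarith)) (by linarith)) hτ

lemma ratio_mono {s₁ s₂ : ℝ} (ha : 0 ≤ a) (h1 : 0 ≤ s₁) (h : s₁ ≤ s₂) :
    s₁ / (a + s₁) ≤ s₂ / (a + s₂) := by
  rcases eq_or_lt_of_le (by linarith : (0:ℝ) ≤ a + s₁) with h0 | h0
  · have hs1 : s₁ = 0 := by linarith [(by linarith : a + s₁ = 0)]
    rw [hs1, zero_div]
    exact div_nonneg (by linarith) (by linarith)
  · rw [div_le_div_iff₀ h0 (by linarith)]
    nlinarith

lemma shiftD_eq (hg0 : g 0 = 0) : Set.EqOn (shiftD g 0) g (Set.Ici 0) := by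
  intro τ hτ
  rcases eq_or_lt_of_le (Set.mem_Ici.1 hτ) with h | h
  · simp [shiftD, ← h, hg0]
  · simp only [shiftD, zero_add]
    field_simp

lemma shiftD_monotoneOn (hg : ∀ x, 0 ≤ x → 0 ≤ g x) (hgm : MonotoneOn g (Set.Ici 0))
    (ha : 0 ≤ a) : MonotoneOn (shiftD g a) (Set.Ici 0) := by
  intro s₁ hs₁ s₂ hs₂ h
  have e : ∀ s, shiftD g a s = g (a+s) * (s/(a+s)) := fun s => by
    rw [shiftD, div_mul_eq_mul_div, mul_div_assoc]
  rw [e, e]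
  apply mul_le_mul (hgm (by simp; linarith [Set.mem_Ici.1 hs₁]) (by simp; linarith [Set.mem_Ici.1 hs₂]) (by linarith))
    (ratio_mono ha hs₁ h) (div_nonneg hs₁ (by linarith [Set.mem_Ici.1 hs₁]))
    (hg _ (by linarith [Set.mem_Ici.1 hs₂]))

lemma shiftD_continuousOn (ha : 0 ≤ a) (hgc : ContinuousOn g (Set.Ici 0)) (hg0 : g 0 = 0) :
    ContinuousOn (shiftD g a) (Set.Ici 0) := by
  rcases eq_or_lt_of_le ha with h | h
  · rw [← h]
    exact hgc.congr (shiftD_eq hg0)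
  · apply ContinuousOn.mul _ continuousOn_id
    apply ContinuousOn.div
    · exact hgc.comp (continuous_const.add continuous_id).continuousOn
        (fun τ hτ => Set.mem_Ici.2 (by linarith [Set.mem_Ici.1 hτ] : (0:ℝ) ≤ a + τ))
    · exact (continuous_const.add continuous_id).continuousOn
    · intro τ hτ
      have h1 := Set.mem_Ici.1 hτ
      show a + τ ≠ 0
      positivity

lemma shiftD_intervalIntegrable (ha : 0 ≤ a) (hgc : ContinuousOn g (Set.Ici 0))
    (hg0 : g 0 = 0) {u v : ℝ} (hu : 0 ≤ u) (hv : 0 ≤ v) :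
    IntervalIntegrable (shiftD g a) MeasureTheory.volume u v := by
  apply ContinuousOn.intervalIntegrable
  exact (shiftD_continuousOn ha hgc hg0).mono
    (fun x hx => le_trans (le_min hu hv) hx.1)

lemma shift_eq_integral (t : ℝ) : shift g a t = ∫ τ in (0:ℝ)..t, shiftD g a τ := rfl

lemma shift_sub (ha : 0 ≤ a) (hgc : ContinuousOn g (Set.Ici 0)) (hg0 : g 0 = 0)
    {u v : ℝ} (hu : 0 ≤ u) (hv : 0 ≤ v) :
    shift g a v - shift g a u = ∫ τ in u..v, shiftD g a τ := by
  rw [shift_eq_integral, shift_eq_integral]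
  rw [← intervalIntegral.integral_add_adjacent_intervals
    (shiftD_intervalIntegrable ha hgc hg0 le_rfl hu)
    (shiftD_intervalIntegrable ha hgc hg0 hu hv)]
  ring

lemma shift_nonneg (hg : ∀ x, 0 ≤ x → 0 ≤ g x) (ha : 0 ≤ a) {t : ℝ} (ht : 0 ≤ t) :
    0 ≤ shift g a t := by
  rw [shift_eq_integral]
  apply intervalIntegral.integral_nonneg ht
  intro u hu
  exact shiftD_nonneg hg ha hu.1

lemma shift_le (hg : ∀ x, 0 ≤ x → 0 ≤ g x) (hgm : MonotoneOn g (Set.Ici 0))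
    (hgc : ContinuousOn g (Set.Ici 0)) (hg0 : g 0 = 0) (ha : 0 ≤ a) {t : ℝ} (ht : 0 ≤ t) :
    shift g a t ≤ t * shiftD g a t := by
  rw [shift_eq_integral]
  calc (∫ τ in (0:ℝ)..t, shiftD g a τ) ≤ ∫ _ in (0:ℝ)..t, shiftD g a t := by
        apply intervalIntegral.integral_mono_on ht
          (shiftD_intervalIntegrable ha hgc hg0 le_rfl ht) intervalIntegrable_const
        intro x hx
        exact shiftD_monotoneOn hg hgm ha hx.1 ht hx.2
    _ = t * shiftD g a t := by simp

lemma half_le_shift (hg : ∀ x, 0 ≤ x → 0 ≤ g x) (hgm : MonotoneOn g (Set.Ici 0))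
    (hgc : ContinuousOn g (Set.Ici 0)) (hg0 : g 0 = 0) (ha : 0 ≤ a) {t : ℝ} (ht : 0 ≤ t) :
    (t/2) * shiftD g a (t/2) ≤ shift g a t := by
  have h2 : (0:ℝ) ≤ t/2 := by linarith
  have hs := shift_sub ha hgc hg0 (u := t/2) (v := t) h2 ht
  have h0 : 0 ≤ shift g a (t/2) := shift_nonneg hg ha h2
  have hlow : (t/2) * shiftD g a (t/2) ≤ ∫ τ in (t/2)..t, shiftD g a τ := by
    calc (t/2) * shiftD g a (t/2) = ∫ _ in (t/2)..t, shiftD g a (t/2) := by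
          rw [intervalIntegral.integral_const, smul_eq_mul]
          ring
      _ ≤ ∫ τ in (t/2)..t, shiftD g a τ := by
          apply intervalIntegral.integral_mono_on (by linarith)
            intervalIntegrable_const (shiftD_intervalIntegrable ha hgc hg0 h2 ht)
          intro x hx
          exact shiftD_monotoneOn hg hgm ha h2 (by simp; linarith [hx.1]) hx.1
  linarith

lemma shift_tangent (hg : ∀ x, 0 ≤ x → 0 ≤ g x) (hgm : MonotoneOn g (Set.Ici 0))
    (hgc : ContinuousOn g (Set.Ici 0)) (hg0 : g 0 = 0) (ha : 0 ≤ a)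
    {s₀ s : ℝ} (hs₀ : 0 ≤ s₀) (h : s₀ ≤ s) :
    shiftD g a s₀ * (s - s₀) ≤ shift g a s - shift g a s₀ := by
  rw [shift_sub ha hgc hg0 hs₀ (by linarith)]
  calc shiftD g a s₀ * (s - s₀) = ∫ _ in s₀..s, shiftD g a s₀ := by
        rw [intervalIntegral.integral_const, smul_eq_mul]
        ring
    _ ≤ ∫ τ in s₀..s, shiftD g a τ := by
        apply intervalIntegral.integral_mono_on h
          intervalIntegrable_const (shiftD_intervalIntegrable ha hgc hg0 hs₀ (by linarith))
        intro x hx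
        exact shiftD_monotoneOn hg hgm ha hs₀ (by simp; linarith [hx.1]) hx.1

lemma conj_shift_ub (hg : ∀ x, 0 ≤ x → 0 ≤ g x) (hgm : MonotoneOn g (Set.Ici 0))
    (hgc : ContinuousOn g (Set.Ici 0)) (hg0 : g 0 = 0) (ha : 0 ≤ a)
    {t s₀ : ℝ} (ht : 0 ≤ t) (hs₀ : 0 ≤ s₀) (hd : t ≤ shiftD g a s₀) :
    ∀ z ∈ (fun s => s * t - shift g a s) '' Set.Ici 0, z ≤ s₀ * t := by
  rintro z ⟨s, hs, rfl⟩
  have hs' : (0:ℝ) ≤ s := hs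
  dsimp only
  rcases le_total s s₀ with h | h
  · have := shift_nonneg hg ha hs'
    nlinarith
  · have h1 := shift_tangent hg hgm hgc hg0 ha hs₀ h
    have h2 := shift_nonneg hg ha hs₀
    nlinarith [mul_le_mul_of_nonneg_right hd (by linarith : (0:ℝ) ≤ s - s₀)]

lemma conj_shift_le (hg : ∀ x, 0 ≤ x → 0 ≤ g x) (hgm : MonotoneOn g (Set.Ici 0))
    (hgc : ContinuousOn g (Set.Ici 0)) (hg0 : g 0 = 0) (ha : 0 ≤ a)
    {t s₀ : ℝ} (ht : 0 ≤ t) (hs₀ : 0 ≤ s₀) (hd : t ≤ shiftD g a s₀) :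
    conj (shift g a) t ≤ s₀ * t := by
  apply csSup_le
  · exact ⟨_, ⟨0, Set.mem_Ici.2 le_rfl, rfl⟩⟩
  · exact conj_shift_ub hg hgm hgc hg0 ha ht hs₀ hd

lemma conj_shift_ge (hg : ∀ x, 0 ≤ x → 0 ≤ g x) (hgm : MonotoneOn g (Set.Ici 0))
    (hgc : ContinuousOn g (Set.Ici 0)) (hg0 : g 0 = 0) (ha : 0 ≤ a)
    {t s₀ s₁ : ℝ} (ht : 0 ≤ t) (hs₀ : 0 ≤ s₀) (hd : t ≤ shiftD g a s₀) (hs₁ : 0 ≤ s₁) :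
    s₁ * t - shift g a s₁ ≤ conj (shift g a) t := by
  have hb : BddAbove ((fun s => s * t - shift g a s) '' Set.Ici 0) :=
    ⟨s₀ * t, fun z hz => conj_shift_ub hg hgm hgc hg0 ha ht hs₀ hd z hz⟩
  exact le_csSup hb ⟨s₁, Set.mem_Ici.2 hs₁, rfl⟩

end Shift


def Cc (γ₁ : ℝ) : ℝ := (2:ℝ) ^ (1/γ₁)
def Mc (γ₁ : ℝ) : ℝ := 2 * Cc γ₁
def deltaC (γ₁ γ₂ : ℝ) : ℝ := min ((2:ℝ) ^ (-γ₂-1)) ((1/2) * (1/4:ℝ) ^ (1/γ₁))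
def epsC (γ₁ γ₂ : ℝ) : ℝ := min ((deltaC γ₁ γ₂)^2) ((2:ℝ) ^ (-γ₂-1) / Cc γ₁)

section Consts
variable {γ₁ γ₂ : ℝ} (hγ₁ : 0 < γ₁)
include hγ₁

lemma Cc_pos : 0 < Cc γ₁ := Real.rpow_pos_of_pos two_pos _

lemma one_le_Cc : 1 ≤ Cc γ₁ :=
  Real.one_le_rpow one_le_two (by positivity)

lemma Cc_rpow : (Cc γ₁) ^ γ₁ = 2 := by
  rw [Cc, ← Real.rpow_mul (by norm_num : (0:ℝ) ≤ 2), one_div,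
    inv_mul_cancel₀ (ne_of_gt hγ₁), Real.rpow_one]

lemma Mc_pos : 0 < Mc γ₁ := by
  have := Cc_pos (γ₁ := γ₁) hγ₁
  rw [Mc]; positivity

lemma two_le_Mc : 2 ≤ Mc γ₁ := by
  have := one_le_Cc (γ₁ := γ₁) hγ₁
  rw [Mc]; nlinarith

lemma two_le_Mc_rpow : 2 ≤ (Mc γ₁) ^ γ₁ := by
  have h1 : (Cc γ₁) ^ γ₁ ≤ (Mc γ₁) ^ γ₁ := by
    apply Real.rpow_le_rpow (Cc_pos hγ₁).le _ hγ₁.le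
    rw [Mc]
    nlinarith [Cc_pos (γ₁ := γ₁) hγ₁]
  rw [Cc_rpow hγ₁] at h1
  exact h1

lemma deltaC_pos : 0 < deltaC γ₁ γ₂ := by
  apply lt_min (Real.rpow_pos_of_pos two_pos _)
  have : (0:ℝ) < (1/4:ℝ) ^ (1/γ₁) := Real.rpow_pos_of_pos (by norm_num) _
  linarith

lemma deltaC_le_half (hγ : γ₁ ≤ γ₂) : deltaC γ₁ γ₂ ≤ 1/2 := by
  apply le_trans (min_le_left _ _)
  calc (2:ℝ) ^ (-γ₂-1) ≤ (2:ℝ) ^ (-1 : ℝ) :=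
        Real.rpow_le_rpow_of_exponent_le one_le_two (by linarith)
    _ = 1/2 := by
        rw [Real.rpow_neg_one]
        norm_num

lemma epsC_pos : 0 < epsC γ₁ γ₂ := by
  apply lt_min
  · exact pow_pos (deltaC_pos hγ₁) 2
  · exact div_pos (Real.rpow_pos_of_pos two_pos _) (Cc_pos hγ₁)

lemma epsC_le_one (hγ : γ₁ ≤ γ₂) : epsC γ₁ γ₂ ≤ 1 := by
  apply le_trans (min_le_left _ _)
  have h := deltaC_le_half hγ₁ hγ
  have h0 := deltaC_pos (γ₂ := γ₂) hγ₁
  nlinarith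

lemma epsC_Cc_le : epsC γ₁ γ₂ * Cc γ₁ ≤ (2:ℝ)^(-γ₂-1) := by
  have h := min_le_right ((deltaC γ₁ γ₂)^2) ((2:ℝ) ^ (-γ₂-1) / Cc γ₁)
  have hC := Cc_pos (γ₁ := γ₁) hγ₁
  rw [epsC]
  calc min ((deltaC γ₁ γ₂)^2) ((2:ℝ) ^ (-γ₂-1) / Cc γ₁) * Cc γ₁
      ≤ ((2:ℝ) ^ (-γ₂-1) / Cc γ₁) * Cc γ₁ := by nlinarith
    _ = (2:ℝ)^(-γ₂-1) := by field_simp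

lemma deltaC_le_pow : deltaC γ₁ γ₂ ≤ (2:ℝ)^(-γ₂-1) := min_le_left _ _

lemma two_deltaC_rpow_le : (2 * deltaC γ₁ γ₂)^γ₁ ≤ 1/4 := by
  have h1 : 2 * deltaC γ₁ γ₂ ≤ (1/4:ℝ)^(1/γ₁) := by
    have := min_le_right ((2:ℝ) ^ (-γ₂-1)) ((1/2) * (1/4:ℝ) ^ (1/γ₁))
    rw [deltaC]
    linarith
  have h0 := deltaC_pos (γ₂ := γ₂) hγ₁
  calc (2 * deltaC γ₁ γ₂)^γ₁ ≤ ((1/4:ℝ)^(1/γ₁))^γ₁ :=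
        Real.rpow_le_rpow (by linarith) h1 hγ₁.le
    _ = 1/4 := by
        rw [← Real.rpow_mul (by norm_num : (0:ℝ) ≤ 1/4), one_div γ₁,
          inv_mul_cancel₀ (ne_of_gt hγ₁), Real.rpow_one]

omit hγ₁ in
lemma pow2_cancel : (2:ℝ)^(γ₂:ℝ) * (2:ℝ)^(-γ₂-1) = 1/2 := by
  rw [← Real.rpow_add two_pos]
  have : γ₂ + (-γ₂-1) = -1 := by ring
  rw [this, Real.rpow_neg_one]
  norm_num

end Consts

section Est
variable (H : IsEllipticNFun ρ ρ' ρ'' γ₁ γ₂)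
include H

lemma shiftD_eval {a s : ℝ} : shiftD ρ' a s = ρ' (a + s) * (s / (a + s)) := by
  rw [shiftD, div_mul_eq_mul_div, mul_div_assoc]

set_option maxHeartbeats 1000000 in
lemma estA {a t : ℝ} (ha : 0 ≤ a) (ht : 0 < t) :
    t ≤ shiftD ρ' a (Mc γ₁ * (t * phi ρ' (ρ' a + t) / (ρ' a + t))) := by
  have hγ₁ := H.gamma_pos
  set b := ρ' a with hb
  have hb0 : 0 ≤ b := rho'_nonneg H ha
  have hbt : 0 < b + t := by linarith
  set v := phi ρ' (b + t) with hv
  have hv0 : 0 < v := phi_pos H hbt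
  have hva : a ≤ v := by
    have := phi_mono H hb0 (by linarith : b ≤ b + t)
    rwa [hb, phi_rho' H ha] at this
  have hrv : ρ' v = b + t := rho'_phi H hbt.le
  set r := t * v / (b + t) with hr
  have hr0 : 0 < r := by positivity
  have hC1 : 1 ≤ Cc γ₁ := one_le_Cc hγ₁
  have hM2 : 2 ≤ Mc γ₁ := two_le_Mc hγ₁
  set s₀ := Mc γ₁ * r with hs₀
  have hs₀0 : 0 < s₀ := by nlinarith
  rcases le_total b t with hcase | hcase
  · -- t ≥ b
    have hr2 : v / 2 ≤ r := by
      rw [hr, le_div_iff₀ hbt]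
      nlinarith
    have hsCv : Cc γ₁ * v ≤ s₀ := by
      rw [hs₀, Mc]
      nlinarith
    have hsa : a ≤ s₀ := le_trans hva (le_trans (by nlinarith) hsCv)
    have h1 : 2*(b+t) ≤ ρ' (a + s₀) := by
      have h2 : (Cc γ₁)^γ₁ * ρ' v ≤ ρ' (Cc γ₁ * v) := rho'_scale_ge H hv0 hC1
      rw [Cc_rpow hγ₁, hrv] at h2
      have h3 : ρ' (Cc γ₁ * v) ≤ ρ' (a + s₀) := by
        apply rho'_monotoneOn H (Set.mem_Ici.2 (by nlinarith)) (Set.mem_Ici.2 (by linarith))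
        linarith
      linarith
    have hratio : 1/2 ≤ s₀ / (a + s₀) := by
      rw [le_div_iff₀ (by linarith)]
      linarith
    calc t ≤ (2*(b+t)) * (1/2) := by linarith
      _ ≤ ρ' (a+s₀) * (s₀/(a+s₀)) :=
          mul_le_mul h1 hratio (by norm_num) (rho'_nonneg H (by linarith))
      _ = shiftD ρ' a s₀ := (shiftD_eval H).symm
  · -- t ≤ b
    have ha0 : 0 < a := by
      rcases eq_or_lt_of_le ha with h | h
      · exfalso
        have : b = 0 := by rw [hb, ← h, rho'_zero H]
        linarith
      · exact h
    have hbpos : 0 < b := by linarith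
    set θ := Mc γ₁ * t / (2*b) with hθ
    have hθ0 : 0 < θ := by
      rw [hθ]
      positivity
    have hθM : θ ≤ Mc γ₁ / 2 := by
      rw [hθ, div_le_div_iff₀ (by linarith) (by norm_num)]
      nlinarith
    have hθa : θ * a ≤ s₀ := by
      have hra : t * a / (2*b) ≤ r := by
        rw [hr, div_le_div_iff₀ (by linarith) hbt]
        have k1 : t*a ≤ t*v := by nlinarith
        have k2 : b + t ≤ 2*b := by linarith
        nlinarith [mul_le_mul_of_nonneg_right k1 hbt.le,
          mul_le_mul_of_nonneg_left k2 (by positivity : (0:ℝ) ≤ t*v)]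
      rw [hθ, hs₀]
      calc Mc γ₁ * t / (2*b) * a = Mc γ₁ * (t * a / (2*b)) := by ring
        _ ≤ Mc γ₁ * r := by nlinarith
    have hmono : shiftD ρ' a (θ * a) ≤ shiftD ρ' a s₀ :=
      shiftD_monotoneOn (fun x hx => rho'_nonneg H hx) (rho'_monotoneOn H) ha
        (Set.mem_Ici.2 (by positivity)) (Set.mem_Ici.2 hs₀0.le) hθa
    have heval : shiftD ρ' a (θ * a) = ρ' ((1+θ)*a) * (θ/(1+θ)) := by
      rw [shiftD_eval H]
      have e1 : a + θ * a = (1+θ)*a := by ring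
      have e2 : θ * a / ((1+θ)*a) = θ/(1+θ) := by
        rw [mul_div_mul_right _ _ (ne_of_gt ha0)]
      rw [e1, e2]
    have hkey : (1+θ)^γ₁ * b ≤ ρ' ((1+θ)*a) := by
      have := rho'_scale_ge H ha0 (by linarith : (1:ℝ) ≤ 1 + θ)
      rwa [← hb] at this
    have hpow : 2 / Mc γ₁ ≤ (1+θ)^(γ₁-1) := by
      rcases le_total 1 γ₁ with hg | hg
      · have h1 : (1:ℝ) ≤ (1+θ)^(γ₁-1) :=
          Real.one_le_rpow (by linarith) (by linarith)
        have := Mc_pos (γ₁ := γ₁) hγ₁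
        calc 2 / Mc γ₁ ≤ 1 := by
              rw [div_le_one (by linarith)]
              linarith
          _ ≤ (1+θ)^(γ₁-1) := h1
      · have hθM2 : 1 + θ ≤ Mc γ₁ := by linarith
        have h1 : (Mc γ₁)^(γ₁-1) ≤ (1+θ)^(γ₁-1) :=
          Real.rpow_le_rpow_of_nonpos (by linarith) hθM2 (by linarith)
        have h2 : (Mc γ₁)^(γ₁-1) = (Mc γ₁)^γ₁ / Mc γ₁ := by
          rw [Real.rpow_sub (Mc_pos hγ₁), Real.rpow_one]
        have h3 := two_le_Mc_rpow (γ₁ := γ₁) hγ₁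
        have h4 := Mc_pos (γ₁ := γ₁) hγ₁
        have : 2 / Mc γ₁ ≤ (Mc γ₁)^(γ₁-1) := by
          rw [h2, div_le_div_iff₀ h4 h4]
          nlinarith
        linarith
    have hfin : t ≤ ρ' ((1+θ)*a) * (θ/(1+θ)) := by
      have e3 : (1+θ)^γ₁ * (θ/(1+θ)) = θ * (1+θ)^(γ₁-1) := by
        rw [Real.rpow_sub (by linarith : (0:ℝ) < 1+θ), Real.rpow_one]
        field_simp
      have h5 : (1+θ)^γ₁ * b * (θ/(1+θ)) ≤ ρ' ((1+θ)*a) * (θ/(1+θ)) := by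
        apply mul_le_mul_of_nonneg_right hkey
        positivity
      have h6 : t = b * θ * (2 / Mc γ₁) := by
        rw [hθ]
        field_simp
      have h7 : b * θ * (2 / Mc γ₁) ≤ b * θ * (1+θ)^(γ₁-1) := by
        apply mul_le_mul_of_nonneg_left hpow
        positivity
      have h8 : (1+θ)^γ₁ * b * (θ/(1+θ)) = b * θ * (1+θ)^(γ₁-1) := by
        linear_combination b * e3
      rw [h6]
      rw [← h8] at h7
      linarith
    rw [heval] at hmono
    linarith

set_option maxHeartbeats 1000000 in
lemma estB {a t : ℝ} (ha : 0 ≤ a) (ht : 0 < t) :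
    shiftD ρ' a (epsC γ₁ γ₂ * (t * phi ρ' (ρ' a + t) / (ρ' a + t))) ≤ t/2 := by
  have hγ₁ := H.gamma_pos
  have hγ := H.gamma_le
  set b := ρ' a with hb
  have hb0 : 0 ≤ b := rho'_nonneg H ha
  have hbt : 0 < b + t := by linarith
  set v := phi ρ' (b + t) with hv
  have hv0 : 0 < v := phi_pos H hbt
  have hva : a ≤ v := by
    have := phi_mono H hb0 (by linarith : b ≤ b + t)
    rwa [hb, phi_rho' H ha] at this
  have hrv : ρ' v = b + t := rho'_phi H hbt.le
  set r := t * v / (b + t) with hr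
  have hr0 : 0 < r := by positivity
  have hrlev : r ≤ v := by
    rw [hr, div_le_iff₀ hbt]
    nlinarith
  set ε := epsC γ₁ γ₂ with he
  set δ := deltaC γ₁ γ₂ with hd
  have hε0 : 0 < ε := epsC_pos hγ₁
  have hδ0 : 0 < δ := deltaC_pos hγ₁
  have hδh : δ ≤ 1/2 := deltaC_le_half hγ₁ hγ
  have hεδ : ε ≤ δ^2 := min_le_left _ _
  have hε1 : ε ≤ 1 := epsC_le_one hγ₁ hγ
  have hC1 : 1 ≤ Cc γ₁ := one_le_Cc hγ₁
  set s₁ := ε * r with hs₁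
  have hs₁0 : 0 < s₁ := by positivity
  have heval : shiftD ρ' a s₁ = ρ' (a + s₁) * (s₁ / (a + s₁)) := shiftD_eval H
  rcases le_total t b with hcase | hcase
  · -- Case I : t ≤ b
    have ha0 : 0 < a := by
      rcases eq_or_lt_of_le ha with h | h
      · exfalso
        have : b = 0 := by rw [hb, ← h, rho'_zero H]
        linarith
      · exact h
    have hbpos : 0 < b := by linarith
    have hvCa : v ≤ Cc γ₁ * a := by
      have h1 : v ≤ phi ρ' (2*b) := phi_mono H hbt.le (by linarith)
      have h2 : phi ρ' (2*b) ≤ 2^(1/γ₁) * phi ρ' b := phi_scale H hb0 one_le_two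
      have h3 : phi ρ' b = a := by rw [hb, phi_rho' H ha]
      rw [h3] at h2
      calc v ≤ 2^(1/γ₁) * a := le_trans h1 h2
        _ = Cc γ₁ * a := by rw [Cc]
    have hεC : ε * Cc γ₁ ≤ (2:ℝ)^(-γ₂-1) := epsC_Cc_le hγ₁
    have hp2 : (0:ℝ) < (2:ℝ)^(γ₂:ℝ) := Real.rpow_pos_of_pos two_pos _
    have hpm : (0:ℝ) < (2:ℝ)^(-γ₂-1:ℝ) := Real.rpow_pos_of_pos two_pos _
    have hpm1 : (2:ℝ)^(-γ₂-1:ℝ) ≤ 1 := by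
      calc (2:ℝ)^(-γ₂-1:ℝ) ≤ (2:ℝ)^(0:ℝ) :=
            Real.rpow_le_rpow_of_exponent_le one_le_two (by linarith)
        _ = 1 := Real.rpow_zero 2
    have hcancel : (2:ℝ)^(γ₂:ℝ) * (2:ℝ)^(-γ₂-1) = 1/2 := pow2_cancel
    have hrb : r * b ≤ t * v := by
      have : r * (b+t) = t * v := by
        rw [hr, div_mul_cancel₀ _ (ne_of_gt hbt)]
      nlinarith
    have hs₁b : s₁ * b ≤ ε * Cc γ₁ * (t * a) := by
      have k1 : s₁ * b = ε * (r * b) := by rw [hs₁]; ring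
      have k2 : ε * (r * b) ≤ ε * (t * v) := by nlinarith [mul_le_mul_of_nonneg_left hrb hε0.le]
      have k3 : ε * (t * v) ≤ ε * (t * (Cc γ₁ * a)) := by
        nlinarith [mul_le_mul_of_nonneg_left hvCa (mul_pos hε0 ht).le]
      calc s₁ * b ≤ ε * (t * (Cc γ₁ * a)) := by rw [k1]; linarith
        _ = ε * Cc γ₁ * (t * a) := by ring
    have hs₁a : s₁ ≤ a := by
      have k1 : s₁ * b ≤ 1 * (t * a) := by
        calc s₁ * b ≤ ε * Cc γ₁ * (t * a) := hs₁b
          _ ≤ 1 * (t * a) := by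
              nlinarith [mul_le_mul_of_nonneg_right (le_trans hεC hpm1)
                (by positivity : (0:ℝ) ≤ t*a)]
      have k2 : t * a ≤ b * a := by nlinarith
      nlinarith [k1, k2]
    have h1 : ρ' (a + s₁) ≤ (2:ℝ)^(γ₂:ℝ) * b := by
      have hsc := rho'_scale_le H ha0 one_le_two
      have hm : ρ' (a+s₁) ≤ ρ' (2*a) := by
        apply rho'_monotoneOn H (Set.mem_Ici.2 (by linarith)) (Set.mem_Ici.2 (by linarith))
        linarith
      rw [hb]
      linarith
    have h2 : s₁/(a+s₁) ≤ s₁/a := by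
      apply div_le_div_of_nonneg_left hs₁0.le ha0 (by linarith)
    have h3 : shiftD ρ' a s₁ ≤ (2:ℝ)^(γ₂:ℝ) * b * (s₁/a) := by
      rw [heval]
      apply mul_le_mul h1 h2 (by positivity) (by positivity)
    have h4 : (2:ℝ)^(γ₂:ℝ) * b * (s₁/a) ≤ t/2 := by
      rw [← mul_div_assoc]
      rw [div_le_iff₀ ha0]
      have k1 : (2:ℝ)^(γ₂:ℝ) * (s₁*b) ≤ (2:ℝ)^(γ₂:ℝ) * (ε * Cc γ₁ * (t*a)) :=
        mul_le_mul_of_nonneg_left hs₁b hp2.le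
      have k2 : (2:ℝ)^(γ₂:ℝ) * (ε * Cc γ₁ * (t*a)) ≤ (2:ℝ)^(γ₂:ℝ) * ((2:ℝ)^(-γ₂-1) * (t*a)) :=
        mul_le_mul_of_nonneg_left
          (mul_le_mul_of_nonneg_right hεC (by positivity)) hp2.le
      have k3 : (2:ℝ)^(γ₂:ℝ) * ((2:ℝ)^(-γ₂-1) * (t*a)) = (t*a)/2 := by
        rw [← mul_assoc, hcancel]
        ring
      nlinarith
    linarith
  · -- Case II : b ≤ t
    have hs₁δv : s₁ ≤ δ^2 * v := by nlinarith
    have hδδ : δ^2 ≤ δ := by nlinarith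
    rcases le_total a (δ * v) with hav | hav
    · -- II.a
      have hsum : a + s₁ ≤ (2*δ) * v := by nlinarith
      have h2δ : 0 < 2*δ := by linarith
      have h2δ1 : 2*δ ≤ 1 := by linarith
      have h1 : ρ' (a+s₁) ≤ (2*δ)^γ₁ * (b+t) := by
        have hm : ρ' (a+s₁) ≤ ρ' ((2*δ)*v) := by
          apply rho'_monotoneOn H (Set.mem_Ici.2 (by linarith)) (Set.mem_Ici.2 (by positivity))
          exact hsum
        have hsc := rho'_scale_small H hv0 h2δ h2δ1
        rw [hrv] at hsc
        linarith
      have hratio1 : s₁/(a+s₁) ≤ 1 := by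
        rw [div_le_one (by linarith)]
        linarith
      have hq : (2*δ)^γ₁ ≤ 1/4 := two_deltaC_rpow_le hγ₁
      have hqpos : (0:ℝ) ≤ (2*δ)^γ₁ := Real.rpow_nonneg (by linarith) _
      rw [heval]
      calc ρ' (a + s₁) * (s₁/(a+s₁)) ≤ ((2*δ)^γ₁ * (b+t)) * 1 := by
            apply mul_le_mul h1 hratio1 (by positivity) (by positivity)
        _ ≤ (1/4) * (2*t) := by nlinarith
        _ = t/2 := by ring
    · -- II.b
      have ha0 : 0 < a := lt_of_lt_of_le (by positivity) hav
      have hsum2 : a + s₁ ≤ 2*v := by nlinarith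
      have hp2 : (0:ℝ) < (2:ℝ)^(γ₂:ℝ) := Real.rpow_pos_of_pos two_pos _
      have hcancel : (2:ℝ)^(γ₂:ℝ) * (2:ℝ)^(-γ₂-1) = 1/2 := pow2_cancel
      have hδpow : δ ≤ (2:ℝ)^(-γ₂-1) := deltaC_le_pow hγ₁
      have h1 : ρ' (a+s₁) ≤ (2:ℝ)^(γ₂:ℝ) * (b+t) := by
        have hm : ρ' (a+s₁) ≤ ρ' (2*v) := by
          apply rho'_monotoneOn H (Set.mem_Ici.2 (by linarith)) (Set.mem_Ici.2 (by positivity))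
          exact hsum2
        have hsc := rho'_scale_le H hv0 one_le_two
        rw [hrv] at hsc
        linarith
      have hkey : s₁ * (b+t) ≤ δ * t * a := by
        have k0 : r * (b+t) = t * v := by
          rw [hr, div_mul_cancel₀ _ (ne_of_gt hbt)]
        have ks : s₁ ≤ δ^2 * r := by nlinarith
        have k1 : s₁ * (b+t) ≤ δ^2 * (t * v) := by
          calc s₁ * (b+t) ≤ (δ^2 * r) * (b+t) := mul_le_mul_of_nonneg_right ks hbt.le
            _ = δ^2 * (r * (b+t)) := by ring
            _ = δ^2 * (t*v) := by rw [k0]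
        have k2 : δ^2 * (t*v) = δ * t * (δ * v) := by ring
        have k3 : δ * t * (δ * v) ≤ δ * t * a :=
          mul_le_mul_of_nonneg_left hav (by positivity)
        nlinarith [k1, k2, k3]
      have h2 : s₁/(a+s₁) ≤ s₁/a := by
        apply div_le_div_of_nonneg_left hs₁0.le ha0 (by linarith)
      have h3 : shiftD ρ' a s₁ ≤ (2:ℝ)^(γ₂:ℝ) * (b+t) * (s₁/a) := by
        rw [heval]
        apply mul_le_mul h1 h2 (by positivity) (by positivity)
      have h4 : (2:ℝ)^(γ₂:ℝ) * (b+t) * (s₁/a) ≤ t/2 := by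
        rw [← mul_div_assoc, div_le_iff₀ ha0]
        have k1 : (2:ℝ)^(γ₂:ℝ) * (s₁*(b+t)) ≤ (2:ℝ)^(γ₂:ℝ) * (δ * t * a) :=
          mul_le_mul_of_nonneg_left hkey hp2.le
        have k2 : (2:ℝ)^(γ₂:ℝ) * (δ * t * a) ≤ (2:ℝ)^(γ₂:ℝ) * ((2:ℝ)^(-γ₂-1) * t * a) :=
          mul_le_mul_of_nonneg_left
            (mul_le_mul_of_nonneg_right (mul_le_mul_of_nonneg_right hδpow ht.le) ha0.le)
            hp2.le
        have k3 : (2:ℝ)^(γ₂:ℝ) * ((2:ℝ)^(-γ₂-1) * t * a) = t*a/2 := by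
          rw [← mul_assoc, ← mul_assoc, hcancel]
          ring
        nlinarith
      linarith

lemma psi_upper {a t : ℝ} (ha : 0 ≤ a) (ht : 0 ≤ t) :
    shift (phi ρ') (ρ' a) t ≤ t * (t * phi ρ' (ρ' a + t) / (ρ' a + t)) := by
  have hb0 : 0 ≤ ρ' a := rho'_nonneg H ha
  have h := shift_le (fun x hx => phi_nonneg H hx) (fun y1 h1 y2 h2 h => phi_mono H h1 h)
    (phi_continuousOn H) (phi_zero H) hb0 ht
  calc shift (phi ρ') (ρ' a) t ≤ t * shiftD (phi ρ') (ρ' a) t := h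
    _ = t * (t * phi ρ' (ρ' a + t) / (ρ' a + t)) := by rw [shiftD]; ring

lemma psi_lower {a t : ℝ} (ha : 0 ≤ a) (ht : 0 ≤ t) :
    t * (t * phi ρ' (ρ' a + t) / (ρ' a + t)) ≤ (4 * Cc γ₁) * shift (phi ρ') (ρ' a) t := by
  have hγ₁ := H.gamma_pos
  have hC0 : 0 < Cc γ₁ := Cc_pos hγ₁
  set b := ρ' a with hb
  have hb0 : 0 ≤ b := rho'_nonneg H ha
  rcases eq_or_lt_of_le ht with h0 | ht0
  · rw [← h0]
    have : shift (phi ρ') b 0 = 0 := intervalIntegral.integral_same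
    rw [this]
    simp
  · have hbt : 0 < b + t := by linarith
    have hbt2 : 0 < b + t/2 := by linarith
    set X := phi ρ' (b + t) with hX
    set Y := phi ρ' (b + t/2) with hY
    have hX0 : 0 ≤ X := phi_nonneg H hbt.le
    have hY0 : 0 ≤ Y := phi_nonneg H hbt2.le
    have h1 : X ≤ Cc γ₁ * Y := by
      have k1 : X ≤ phi ρ' (2*(b + t/2)) := phi_mono H hbt.le (by linarith)
      have k2 : phi ρ' (2*(b+t/2)) ≤ 2^(1/γ₁) * Y := phi_scale H hbt2.le one_le_two
      calc X ≤ 2^(1/γ₁) * Y := le_trans k1 k2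
        _ = Cc γ₁ * Y := by rw [Cc]
    have hXY : X / Cc γ₁ ≤ Y := by
      rw [div_le_iff₀ hC0]
      nlinarith
    have hfrac : (X / Cc γ₁) / (b+t) ≤ Y / (b + t/2) := by
      rw [div_le_div_iff₀ hbt hbt2]
      nlinarith [mul_le_mul hXY (by linarith : b + t/2 ≤ b + t)
        hbt2.le hY0]
    have hD : (X / Cc γ₁) / (b+t) * (t/2) ≤ shiftD (phi ρ') b (t/2) := by
      rw [shiftD]
      apply mul_le_mul_of_nonneg_right hfrac (by linarith)
    have hA : (t/2) * shiftD (phi ρ') b (t/2) ≤ shift (phi ρ') b t :=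
      half_le_shift (fun x hx => phi_nonneg H hx) (fun y1 h1 y2 h2 h => phi_mono H h1 h)
        (phi_continuousOn H) (phi_zero H) hb0 ht
    have hB : (t/2) * ((X / Cc γ₁) / (b+t) * (t/2)) ≤ shift (phi ρ') b t := by
      calc (t/2) * ((X / Cc γ₁) / (b+t) * (t/2)) ≤ (t/2) * shiftD (phi ρ') b (t/2) :=
            mul_le_mul_of_nonneg_left hD (by linarith)
        _ ≤ shift (phi ρ') b t := hA
    have heq : t * (t * X / (b+t)) = (4 * Cc γ₁) * ((t/2) * ((X / Cc γ₁) / (b+t) * (t/2))) := by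
      field_simp
      ring
    rw [heq]
    exact mul_le_mul_of_nonneg_left hB (by positivity)

lemma conj_upper {a t : ℝ} (ha : 0 ≤ a) (ht : 0 < t) :
    conj (shift ρ' a) t ≤ Mc γ₁ * (t * phi ρ' (ρ' a + t) / (ρ' a + t)) * t := by
  have hγ₁ := H.gamma_pos
  have hb0 : 0 ≤ ρ' a := rho'_nonneg H ha
  have hbt : 0 < ρ' a + t := by linarith
  have hv0 : 0 ≤ phi ρ' (ρ' a + t) := phi_nonneg H hbt.le
  have hM0 : 0 < Mc γ₁ := Mc_pos hγ₁
  exact conj_shift_le (fun x hx => rho'_nonneg H hx) (rho'_monotoneOn H)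
    H.derivContinuousOn (rho'_zero H) ha ht.le (by positivity) (estA H ha ht)

lemma conj_lower {a t : ℝ} (ha : 0 ≤ a) (ht : 0 < t) :
    epsC γ₁ γ₂ / 2 * (t * phi ρ' (ρ' a + t) / (ρ' a + t)) * t ≤ conj (shift ρ' a) t := by
  have hγ₁ := H.gamma_pos
  have hb0 : 0 ≤ ρ' a := rho'_nonneg H ha
  have hbt : 0 < ρ' a + t := by linarith
  have hv0 : 0 ≤ phi ρ' (ρ' a + t) := phi_nonneg H hbt.le
  have hM0 : 0 < Mc γ₁ := Mc_pos hγ₁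
  have hε0 : 0 < epsC γ₁ γ₂ := epsC_pos hγ₁
  set r := t * phi ρ' (ρ' a + t) / (ρ' a + t) with hr
  have hr0 : 0 ≤ r := by positivity
  set s₁ := epsC γ₁ γ₂ * r with hs₁
  have hs₁0 : 0 ≤ s₁ := by positivity
  have hge : s₁ * t - shift ρ' a s₁ ≤ conj (shift ρ' a) t :=
    conj_shift_ge (fun x hx => rho'_nonneg H hx) (rho'_monotoneOn H)
      H.derivContinuousOn (rho'_zero H) ha ht.le (s₀ := Mc γ₁ * r) (by positivity)
      (estA H ha ht) hs₁0
  have hsh : shift ρ' a s₁ ≤ s₁ * shiftD ρ' a s₁ :=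
    shift_le (fun x hx => rho'_nonneg H hx) (rho'_monotoneOn H)
      H.derivContinuousOn (rho'_zero H) ha hs₁0
  have hD : shiftD ρ' a s₁ ≤ t/2 := estB H ha ht
  have : shift ρ' a s₁ ≤ s₁ * (t/2) :=
    le_trans hsh (mul_le_mul_of_nonneg_left hD hs₁0)
  calc epsC γ₁ γ₂ / 2 * r * t = s₁ * t - s₁ * (t/2) := by rw [hs₁]; ring
    _ ≤ s₁ * t - shift ρ' a s₁ := by linarith
    _ ≤ conj (shift ρ' a) t := hge

lemma conj_shift_zero {a : ℝ} (ha : 0 ≤ a) : conj (shift ρ' a) 0 = 0 := by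
  have hD0 : shiftD ρ' a 0 = 0 := by rw [shiftD, mul_zero]
  have hS0 : shift ρ' a 0 = 0 := intervalIntegral.integral_same
  apply le_antisymm
  · have := conj_shift_le (fun x hx => rho'_nonneg H hx) (rho'_monotoneOn H)
      H.derivContinuousOn (rho'_zero H) ha le_rfl le_rfl (le_of_eq hD0.symm)
    simpa using this
  · have := conj_shift_ge (fun x hx => rho'_nonneg H hx) (rho'_monotoneOn H)
      H.derivContinuousOn (rho'_zero H) ha le_rfl (s₀ := 0) le_rfl (le_of_eq hD0.symm) le_rfl
    simpa [hS0] using this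

lemma shift_deriv_conj_eq {a t : ℝ} (ha : 0 ≤ a) (ht : 0 ≤ t) :
    shift (deriv (conj ρ)) (ρ' a) t = shift (phi ρ') (ρ' a) t := by
  have hb0 : 0 ≤ ρ' a := rho'_nonneg H ha
  rw [shift, shift]
  apply intervalIntegral.integral_congr
  intro τ hτ
  rw [Set.uIcc_of_le ht] at hτ
  dsimp only
  rcases eq_or_lt_of_le (by linarith [hτ.1] : (0:ℝ) ≤ ρ' a + τ) with h0 | h0
  · rw [← h0]
    simp
  · rw [conj_deriv H h0]

lemma part2a_up {a lam : ℝ} (ha : 0 < a) (hl : 0 < lam) (hl1 : lam ≤ 1) :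
    shift ρ' a (lam * a) ≤ ((2:ℝ)^(γ₂:ℝ) * (1+γ₂)) * (lam^2 * ρ a) := by
  have hγ₁ := H.gamma_pos
  have hγ := H.gamma_le
  have hb0 : 0 ≤ ρ' a := rho'_nonneg H ha.le
  have hp2 : (0:ℝ) < (2:ℝ)^(γ₂:ℝ) := Real.rpow_pos_of_pos two_pos _
  have h1 : shift ρ' a (lam * a) ≤ (lam*a) * shiftD ρ' a (lam*a) :=
    shift_le (fun x hx => rho'_nonneg H hx) (rho'_monotoneOn H)
      H.derivContinuousOn (rho'_zero H) ha.le (by positivity)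
  have h3 : ρ' (a + lam*a) ≤ (2:ℝ)^(γ₂:ℝ) * ρ' a := by
    have hm : ρ' (a + lam*a) ≤ ρ' (2*a) := by
      apply rho'_monotoneOn H (Set.mem_Ici.2 (by nlinarith)) (Set.mem_Ici.2 (by linarith))
      nlinarith
    have := rho'_scale_le H ha one_le_two
    linarith
  have h4 : (lam*a) / (a + lam*a) ≤ lam := by
    rw [div_le_iff₀ (by nlinarith)]
    nlinarith [mul_pos (mul_pos hl hl) ha]
  have h5 : shiftD ρ' a (lam*a) ≤ (2:ℝ)^(γ₂:ℝ) * ρ' a * lam := by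
    rw [shiftD_eval H]
    apply mul_le_mul h3 h4 (by positivity) (by positivity)
  have h6 : a * ρ' a ≤ (1+γ₂) * ρ a := mul_le_rho H ha.le
  have h7 : shift ρ' a (lam * a) ≤ (lam*a) * ((2:ℝ)^(γ₂:ℝ) * ρ' a * lam) := by
    calc shift ρ' a (lam * a) ≤ (lam*a) * shiftD ρ' a (lam*a) := h1
      _ ≤ (lam*a) * ((2:ℝ)^(γ₂:ℝ) * ρ' a * lam) :=
          mul_le_mul_of_nonneg_left h5 (by positivity)
  calc shift ρ' a (lam * a) ≤ (lam*a) * ((2:ℝ)^(γ₂:ℝ) * ρ' a * lam) := h7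
    _ = (2:ℝ)^(γ₂:ℝ) * lam^2 * (a * ρ' a) := by ring
    _ ≤ (2:ℝ)^(γ₂:ℝ) * lam^2 * ((1+γ₂) * ρ a) :=
        mul_le_mul_of_nonneg_left h6 (by positivity)
    _ = ((2:ℝ)^(γ₂:ℝ) * (1+γ₂)) * (lam^2 * ρ a) := by ring

lemma part2a_low {a lam : ℝ} (ha : 0 < a) (hl : 0 < lam) (hl1 : lam ≤ 1) :
    (1/8) * (lam^2 * ρ a) ≤ shift ρ' a (lam * a) := by
  have hb0 : 0 ≤ ρ' a := rho'_nonneg H ha.le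
  have hA : ((lam*a)/2) * shiftD ρ' a ((lam*a)/2) ≤ shift ρ' a (lam*a) :=
    half_le_shift (fun x hx => rho'_nonneg H hx) (rho'_monotoneOn H)
      H.derivContinuousOn (rho'_zero H) ha.le (by positivity)
  have hden : 0 < a + lam*a/2 := by nlinarith
  have h2 : ρ' a ≤ ρ' (a + lam*a/2) := by
    apply rho'_monotoneOn H (Set.mem_Ici.2 ha.le) (Set.mem_Ici.2 (by nlinarith))
    nlinarith
  have h3 : lam/4 ≤ (lam*a/2) / (a + lam*a/2) := by
    rw [le_div_iff₀ hden]
    nlinarith [mul_nonneg (by linarith : (0:ℝ) ≤ 1 - lam) (mul_pos hl ha).le]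
  have h4 : ρ' a * (lam/4) ≤ shiftD ρ' a (lam*a/2) := by
    rw [shiftD_eval H]
    apply mul_le_mul h2 h3 (by positivity) (rho'_nonneg H (by nlinarith))
  have h5 : ρ a ≤ a * ρ' a := rho_le_mul H ha.le
  calc (1/8) * (lam^2 * ρ a) ≤ (1/8) * (lam^2 * (a * ρ' a)) := by nlinarith
    _ = ((lam*a)/2) * (ρ' a * (lam/4)) := by ring
    _ ≤ ((lam*a)/2) * shiftD ρ' a ((lam*a)/2) := by
        have : (lam*a)/2 ≥ 0 := by positivity
        have e : shiftD ρ' a ((lam*a)/2) = shiftD ρ' a (lam*a/2) := by norm_num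
        rw [e]
        exact mul_le_mul_of_nonneg_left h4 (by positivity)
    _ ≤ shift ρ' a (lam*a) := hA

lemma part2b_up {a lam : ℝ} (ha : 0 < a) (hl : 0 < lam) (hl1 : lam ≤ 1) :
    conj (shift ρ' a) (lam * ρ' a) ≤ (Mc γ₁ * Cc γ₁ * (1+γ₂)) * (lam^2 * ρ a) := by
  have hγ₁ := H.gamma_pos
  have hγ := H.gamma_le
  have hbpos : 0 < ρ' a := rho'_pos H ha
  set b := ρ' a with hb
  set t := lam * b with htd
  have ht : 0 < t := by positivity
  have hbt : 0 < b + t := by linarith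
  have hup := conj_upper H ha.le ht
  have hC0 : 0 < Cc γ₁ := Cc_pos hγ₁
  have hM0 : 0 < Mc γ₁ := Mc_pos hγ₁
  set v := phi ρ' (b + t) with hv
  have hv0 : 0 ≤ v := phi_nonneg H hbt.le
  have hvCa : v ≤ Cc γ₁ * a := by
    have h1 : v ≤ phi ρ' (2*b) := phi_mono H hbt.le (by nlinarith)
    have h2 : phi ρ' (2*b) ≤ 2^(1/γ₁) * phi ρ' b := phi_scale H hbpos.le one_le_two
    have h3 : phi ρ' b = a := by rw [hb, phi_rho' H ha.le]
    rw [h3] at h2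
    calc v ≤ 2^(1/γ₁) * a := le_trans h1 h2
      _ = Cc γ₁ * a := by rw [Cc]
  have hr : t * v / (b + t) ≤ lam * (Cc γ₁ * a) := by
    rw [div_le_iff₀ hbt]
    have k1 : t * v ≤ t * (Cc γ₁ * a) := mul_le_mul_of_nonneg_left hvCa ht.le
    have k2 : t * (Cc γ₁ * a) = lam * (Cc γ₁ * a) * b := by rw [htd]; ring
    nlinarith [mul_pos (mul_pos hl (mul_pos hC0 ha)) ht]
  have h6 : a * b ≤ (1+γ₂) * ρ a := mul_le_rho H ha.le
  calc conj (shift ρ' a) (lam * b) ≤ Mc γ₁ * (t * v / (b + t)) * t := hup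
    _ ≤ Mc γ₁ * (lam * (Cc γ₁ * a)) * t := by
        apply mul_le_mul_of_nonneg_right _ ht.le
        exact mul_le_mul_of_nonneg_left hr hM0.le
    _ = Mc γ₁ * Cc γ₁ * lam^2 * (a * b) := by rw [htd]; ring
    _ ≤ Mc γ₁ * Cc γ₁ * lam^2 * ((1+γ₂) * ρ a) := by
        apply mul_le_mul_of_nonneg_left h6 (by positivity)
    _ = (Mc γ₁ * Cc γ₁ * (1+γ₂)) * (lam^2 * ρ a) := by ring

lemma part2b_low {a lam : ℝ} (ha : 0 < a) (hl : 0 < lam) (hl1 : lam ≤ 1) :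
    (epsC γ₁ γ₂ / 4) * (lam^2 * ρ a) ≤ conj (shift ρ' a) (lam * ρ' a) := by
  have hγ₁ := H.gamma_pos
  have hbpos : 0 < ρ' a := rho'_pos H ha
  set b := ρ' a with hb
  set t := lam * b with htd
  have ht : 0 < t := by positivity
  have hbt : 0 < b + t := by linarith
  have hε0 : 0 < epsC γ₁ γ₂ := epsC_pos hγ₁
  have hlow := conj_lower H ha.le ht
  set v := phi ρ' (b + t) with hv
  have hva : a ≤ v := by
    have := phi_mono H hbpos.le (by nlinarith : b ≤ b + t)
    rwa [hb, phi_rho' H ha.le] at this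
  have hr : lam * a / 2 ≤ t * v / (b + t) := by
    rw [le_div_iff₀ hbt]
    have k1 : t * a ≤ t * v := mul_le_mul_of_nonneg_left hva ht.le
    have k2 : b + t ≤ 2 * b := by nlinarith
    nlinarith [k1, k2, mul_le_mul_of_nonneg_left k2 (by positivity : (0:ℝ) ≤ lam*a/2), htd]
  have h5 : ρ a ≤ a * b := by
    have := rho_le_mul H ha.le
    rw [hb]
    linarith
  calc (epsC γ₁ γ₂ / 4) * (lam^2 * ρ a) ≤ (epsC γ₁ γ₂ / 4) * (lam^2 * (a * b)) := by
        nlinarith [mul_le_mul_of_nonneg_left h5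
          (by positivity : (0:ℝ) ≤ epsC γ₁ γ₂/4 * lam^2)]
    _ = epsC γ₁ γ₂ / 2 * (lam * a / 2) * t := by rw [htd]; ring
    _ ≤ epsC γ₁ γ₂ / 2 * (t * v / (b + t)) * t := by
        apply mul_le_mul_of_nonneg_right _ ht.le
        exact mul_le_mul_of_nonneg_left hr (by positivity)
    _ ≤ conj (shift ρ' a) (lam * b) := hlow

end Est

end EllipticAux

open EllipticAux

/-- For an elliptic N-function `ρ` there is `c ≥ 1`, depending only on the characteristics,
such that `(ρ_a)*(t) ∼ (ρ*)_{ρ'(a)}(t)` for all `a, t ≥ 0`, and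
`ρ_a(λ a) ∼ λ² ρ(a) ∼ (ρ_a)*(λ ρ'(a))` for all `a ≥ 0` and `λ ∈ [0,1]`.
Here `(ρ*)_{ρ'(a)}` is the shift by `ρ'(a)` of the conjugate `ρ*`, formed with the
derivative of `ρ*`. -/
theorem conj_shift_equiv (γ₁ γ₂ : ℝ) (hγ₁ : 0 < γ₁) (hγ : γ₁ ≤ γ₂) :
    ∃ c : ℝ, 1 ≤ c ∧
      ∀ ρ ρ' ρ'' : ℝ → ℝ, IsEllipticNFun ρ ρ' ρ'' γ₁ γ₂ →
        (∀ a t : ℝ, 0 ≤ a → 0 ≤ t →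
          c⁻¹ * shift (deriv (conj ρ)) (ρ' a) t ≤ conj (shift ρ' a) t ∧
            conj (shift ρ' a) t ≤ c * shift (deriv (conj ρ)) (ρ' a) t) ∧
        (∀ a : ℝ, 0 ≤ a → ∀ lam ∈ Set.Icc (0:ℝ) 1,
          (c⁻¹ * (lam ^ 2 * ρ a) ≤ shift ρ' a (lam * a) ∧
            shift ρ' a (lam * a) ≤ c * (lam ^ 2 * ρ a)) ∧
          (c⁻¹ * (lam ^ 2 * ρ a) ≤ conj (shift ρ' a) (lam * ρ' a) ∧
            conj (shift ρ' a) (lam * ρ' a) ≤ c * (lam ^ 2 * ρ a))) := by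
  have hγ₂ : 0 < γ₂ := lt_of_lt_of_le hγ₁ hγ
  set ε := epsC γ₁ γ₂ with hε
  have hε0 : 0 < ε := epsC_pos hγ₁
  have hε1 : ε ≤ 1 := epsC_le_one hγ₁ hγ
  have hC0 : 0 < Cc γ₁ := Cc_pos hγ₁
  have hM0 : 0 < Mc γ₁ := Mc_pos hγ₁
  have hp2 : (0:ℝ) < (2:ℝ)^(γ₂:ℝ) := Real.rpow_pos_of_pos two_pos _
  set c := 1 + 4*(Cc γ₁)*(Mc γ₁) + 4/ε + 8 + (2:ℝ)^(γ₂:ℝ)*(1+γ₂)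
    + (Mc γ₁)*(Cc γ₁)*(1+γ₂) with hc
  have hc0 : 0 < c := by
    rw [hc]
    positivity
  have k1 : (0:ℝ) < 4*(Cc γ₁)*(Mc γ₁) := by positivity
  have k2 : (0:ℝ) < 4/ε := by positivity
  have k4 : (0:ℝ) < (2:ℝ)^(γ₂:ℝ)*(1+γ₂) := mul_pos hp2 (by linarith)
  have k5 : (0:ℝ) < (Mc γ₁)*(Cc γ₁)*(1+γ₂) := mul_pos (mul_pos hM0 hC0) (by linarith)
  have hc1 : 1 ≤ c := by rw [hc]; linarith
  have hcMC : Mc γ₁ * (4 * Cc γ₁) ≤ c := by rw [hc]; nlinarith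
  have hc8 : 8 ≤ c := by rw [hc]; linarith
  have hcP2 : (2:ℝ)^(γ₂:ℝ)*(1+γ₂) ≤ c := by rw [hc]; linarith
  have hcMC2 : Mc γ₁ * Cc γ₁ * (1+γ₂) ≤ c := by rw [hc]; linarith
  have hc4ε : 4/ε ≤ c := by rw [hc]; linarith
  have hinv2 : c⁻¹ ≤ ε/2 := by
    have h1 : 2/ε ≤ c := by
      have h2 : 2/ε ≤ 4/ε := by
        rw [div_le_div_iff₀ hε0 hε0]
        nlinarith
      linarith
    calc c⁻¹ ≤ (2/ε)⁻¹ := inv_anti₀ (by positivity) h1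
      _ = ε/2 := by rw [inv_div]
  have hinv4 : c⁻¹ ≤ ε/4 := by
    calc c⁻¹ ≤ (4/ε)⁻¹ := inv_anti₀ (by positivity) hc4ε
      _ = ε/4 := by rw [inv_div]
  have hinv8 : c⁻¹ ≤ 1/8 := by
    calc c⁻¹ ≤ (8:ℝ)⁻¹ := inv_anti₀ (by norm_num) hc8
      _ = 1/8 := by norm_num
  refine ⟨c, hc1, ?_⟩
  intro ρ ρ' ρ'' H
  constructor
  · -- part (i)
    intro a t ha ht
    rw [shift_deriv_conj_eq H ha ht]
    have hψ0 : 0 ≤ shift (phi ρ') (ρ' a) t :=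
      shift_nonneg (fun x hx => phi_nonneg H hx) (rho'_nonneg H ha) ht
    rcases eq_or_lt_of_le ht with h0 | ht0
    · have hS : shift (phi ρ') (ρ' a) t = 0 := by
        rw [← h0]
        exact intervalIntegral.integral_same
      have hc2 : conj (shift ρ' a) t = 0 := by
        rw [← h0]
        exact conj_shift_zero H ha
      rw [hS, hc2]
      norm_num
    · constructor
      · -- lower bound
        have h1 := conj_lower H ha ht0
        have h2 := psi_upper H ha ht
        have h3 : (ε/2) * shift (phi ρ') (ρ' a) t ≤ conj (shift ρ' a) t := by
          calc (ε/2) * shift (phi ρ') (ρ' a) t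
              ≤ (ε/2) * (t * (t * phi ρ' (ρ' a + t) / (ρ' a + t))) :=
                mul_le_mul_of_nonneg_left h2 (by positivity)
            _ = ε/2 * (t * phi ρ' (ρ' a + t) / (ρ' a + t)) * t := by ring
            _ ≤ conj (shift ρ' a) t := h1
        calc c⁻¹ * shift (phi ρ') (ρ' a) t ≤ (ε/2) * shift (phi ρ') (ρ' a) t :=
              mul_le_mul_of_nonneg_right hinv2 hψ0
          _ ≤ conj (shift ρ' a) t := h3
      · -- upper bound
        have h1 := conj_upper H ha ht0
        have h2 := psi_lower H ha ht
        calc conj (shift ρ' a) t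
            ≤ Mc γ₁ * (t * phi ρ' (ρ' a + t) / (ρ' a + t)) * t := h1
          _ = Mc γ₁ * (t * (t * phi ρ' (ρ' a + t) / (ρ' a + t))) := by ring
          _ ≤ Mc γ₁ * ((4 * Cc γ₁) * shift (phi ρ') (ρ' a) t) :=
              mul_le_mul_of_nonneg_left h2 hM0.le
          _ = (Mc γ₁ * (4 * Cc γ₁)) * shift (phi ρ') (ρ' a) t := by ring
          _ ≤ c * shift (phi ρ') (ρ' a) t :=
              mul_le_mul_of_nonneg_right hcMC hψ0
  · -- part (ii)
    intro a ha lam hlam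
    obtain ⟨hl0, hl1⟩ := hlam
    have hX0 : 0 ≤ lam^2 * ρ a := mul_nonneg (sq_nonneg lam) (rho_nonneg H ha)
    rcases eq_or_lt_of_le ha with ha0 | ha0
    · -- a = 0
      have hρ0 : ρ a = 0 := by rw [← ha0, H.map_zero]
      have hla : lam * a = 0 := by rw [← ha0, mul_zero]
      have hS : shift ρ' a (lam * a) = 0 := by
        rw [hla]
        exact intervalIntegral.integral_same
      have hb : ρ' a = 0 := by rw [← ha0, rho'_zero H]
      have hcj : conj (shift ρ' a) (lam * ρ' a) = 0 := by
        rw [hb, mul_zero]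
        exact conj_shift_zero H ha
      rw [hρ0, hS, hcj]
      norm_num
    · rcases eq_or_lt_of_le hl0 with hl00 | hl00
      · -- lam = 0
        have hla : lam * a = 0 := by rw [← hl00, zero_mul]
        have hS : shift ρ' a (lam * a) = 0 := by
          rw [hla]
          exact intervalIntegral.integral_same
        have hcj : conj (shift ρ' a) (lam * ρ' a) = 0 := by
          rw [← hl00, zero_mul]
          exact conj_shift_zero H ha
        rw [hS, hcj, ← hl00]
        norm_num
      · refine ⟨⟨?_, ?_⟩, ?_, ?_⟩
        · calc c⁻¹ * (lam^2 * ρ a) ≤ (1/8) * (lam^2 * ρ a) :=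
                mul_le_mul_of_nonneg_right hinv8 hX0
            _ ≤ shift ρ' a (lam * a) := part2a_low H ha0 hl00 hl1
        · calc shift ρ' a (lam * a) ≤ ((2:ℝ)^(γ₂:ℝ) * (1+γ₂)) * (lam^2 * ρ a) :=
                part2a_up H ha0 hl00 hl1
            _ ≤ c * (lam^2 * ρ a) := mul_le_mul_of_nonneg_right hcP2 hX0
        · calc c⁻¹ * (lam^2 * ρ a) ≤ (ε/4) * (lam^2 * ρ a) :=
                mul_le_mul_of_nonneg_right hinv4 hX0
            _ ≤ conj (shift ρ' a) (lam * ρ' a) := part2b_low H ha0 hl00 hl1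
        · calc conj (shift ρ' a) (lam * ρ' a)
              ≤ (Mc γ₁ * Cc γ₁ * (1+γ₂)) * (lam^2 * ρ a) := part2b_up H ha0 hl00 hl1
            _ ≤ c * (lam^2 * ρ a) := mul_le_mul_of_nonneg_right hcMC2 hX0
end
end

section
/- Let q ∈ (1,∞), κ ∈ [0,1], and define ρ(t) := ∫₀ᵗ (κ + s)^{q−2} s ds for t ≥ 0. Then there exists c > 0, depending only on q, such that for all a ≥ 0, all λ ≥ 0 and all t ≥ 0 one has ρ_a(λ t) ≤ c max{λ^q, λ²} ρ_a(t) and (ρ_a)*(λ t) ≤ c max{λ^{q'}, λ²} (ρ_a)*(t), where q' := q/(q−1). -/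
open Set

noncomputable section

open MeasureTheory intervalIntegral

namespace ShiftedIndexAux

variable {q : ℝ}

lemma contOn (hq : 1 < q) {b : ℝ} (hb : 0 ≤ b) :
    ContinuousOn (fun x : ℝ => (b + x) ^ (q - 2) * x) (Ici 0) := by
  rcases hb.eq_or_lt with rfl | hb'
  · have h : ContinuousOn (fun x : ℝ => x ^ (q - 1)) (Ici 0) :=
      continuousOn_id.rpow_const fun x _ => Or.inr (by linarith)
    refine h.congr fun x hx => ?_
    have hx0 : (0:ℝ) ≤ x := hx
    rw [zero_add]
    rw [show q - 1 = (q - 2) + 1 by ring]; beta_reduce; rw [Real.rpow_add' hx0 (by intro h; nlinarith), Real.rpow_one]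
  · have h1 : ContinuousOn (fun x : ℝ => (b + x) ^ (q - 2)) (Ici 0) :=
      (continuous_const.add continuous_id).continuousOn.rpow_const
        fun x hx => Or.inl (by have : (0:ℝ) ≤ x := hx; exact (show (0:ℝ) < b + x by linarith).ne')
    exact h1.mul continuousOn_id

lemma intg (hq : 1 < q) {b u v : ℝ} (hb : 0 ≤ b) (hu : 0 ≤ u) (huv : u ≤ v) :
    IntervalIntegrable (fun τ : ℝ => (b + τ) ^ (q - 2) * τ) volume u v := by
  apply ((contOn hq hb).mono ?_).intervalIntegrable
  rw [uIcc_of_le huv]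
  exact fun x hx => le_trans hu hx.1

lemma Fnonneg (hq : 1 < q) {b t : ℝ} (hb : 0 ≤ b) (ht : 0 ≤ t) :
    0 ≤ ∫ τ in (0:ℝ)..t, (b + τ) ^ (q - 2) * τ := by
  apply intervalIntegral.integral_nonneg ht
  intro u hu
  have : (0:ℝ) ≤ (b + u) ^ (q - 2) := Real.rpow_nonneg (by linarith [hu.1]) _
  exact mul_nonneg this hu.1

lemma shift_eq (hq : 1 < q) {κ a t : ℝ} (hκ : 0 ≤ κ) (ha : 0 ≤ a) (ht : 0 ≤ t) :
    shift (fun s => (κ + s) ^ (q - 2) * s) a t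
      = ∫ τ in (0:ℝ)..t, ((κ + a) + τ) ^ (q - 2) * τ := by
  unfold shift
  apply intervalIntegral.integral_congr
  intro τ hτ
  rw [uIcc_of_le ht] at hτ
  simp only
  by_cases h : a + τ = 0
  · have hτ0 : τ = 0 := by have := hτ.1; linarith
    simp [hτ0]
  · rw [mul_div_assoc, div_self h, mul_one, ← add_assoc]

lemma rpow_two_eq {x : ℝ} : x ^ (2:ℝ) = x * x := by
  rw [show (2:ℝ) = ((2:ℕ):ℝ) by norm_num, Real.rpow_natCast]; ring

lemma scale (hq : 1 < q) {b lam t : ℝ} (hb : 0 ≤ b) (hlam : 0 ≤ lam) (ht : 0 ≤ t) :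
    (∫ τ in (0:ℝ)..(lam * t), (b + τ) ^ (q - 2) * τ)
      ≤ max (lam ^ q) (lam ^ (2:ℝ)) * ∫ τ in (0:ℝ)..t, (b + τ) ^ (q - 2) * τ := by
  rcases hlam.eq_or_lt with rfl | hl
  · simp [Real.zero_rpow (by positivity : q ≠ 0), Real.zero_rpow (two_ne_zero)]
  -- substitution
  have hsub : (∫ τ in (0:ℝ)..(lam * t), (b + τ) ^ (q - 2) * τ)
      = lam • ∫ σ in (0:ℝ)..t, (b + lam * σ) ^ (q - 2) * (lam * σ) := by
    rw [intervalIntegral.smul_integral_comp_mul_left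
        (fun τ : ℝ => (b + τ) ^ (q - 2) * τ) lam, mul_zero]
  set m : ℝ := if 2 ≤ q then max lam 1 else min lam 1 with hm
  have hmpos : 0 < m := by
    rw [hm]; split
    · exact lt_max_of_lt_right one_pos
    · exact lt_min hl one_pos
  have hpt : ∀ σ ∈ Icc (0:ℝ) t,
      (b + lam * σ) ^ (q - 2) * (lam * σ) ≤ (m ^ (q - 2) * lam) * ((b + σ) ^ (q - 2) * σ) := by
    intro σ hσ
    rcases hσ.1.eq_or_lt with rfl | hσ0
    · simp
    have key : (b + lam * σ) ^ (q - 2) ≤ m ^ (q - 2) * (b + σ) ^ (q - 2) := by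
      by_cases hq2 : 2 ≤ q
      · have hmm : m = max lam 1 := by rw [hm, if_pos hq2]
        have h1 : b + lam * σ ≤ m * (b + σ) := by
          have hl1 : lam ≤ m := hmm ▸ le_max_left _ _
          have hl2 : 1 ≤ m := hmm ▸ le_max_right _ _
          nlinarith
        calc (b + lam * σ) ^ (q - 2) ≤ (m * (b + σ)) ^ (q - 2) :=
              Real.rpow_le_rpow (by positivity) h1 (by linarith)
          _ = m ^ (q - 2) * (b + σ) ^ (q - 2) := Real.mul_rpow hmpos.le (by linarith)
      · push_neg at hq2
        have hmm : m = min lam 1 := by rw [hm, if_neg (not_le.mpr hq2)]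
        have hl1 : m ≤ lam := hmm ▸ min_le_left _ _
        have hl2 : m ≤ 1 := hmm ▸ min_le_right _ _
        have h1 : m * (b + σ) ≤ b + lam * σ := by nlinarith
        have h2 : 0 < m * (b + σ) := by positivity
        calc (b + lam * σ) ^ (q - 2) ≤ (m * (b + σ)) ^ (q - 2) :=
              Real.rpow_le_rpow_of_nonpos h2 h1 (by linarith)
          _ = m ^ (q - 2) * (b + σ) ^ (q - 2) := Real.mul_rpow hmpos.le (by positivity)
    have hls : 0 ≤ lam * σ := by positivity
    calc (b + lam * σ) ^ (q - 2) * (lam * σ)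
        ≤ (m ^ (q - 2) * (b + σ) ^ (q - 2)) * (lam * σ) :=
          mul_le_mul_of_nonneg_right key hls
      _ = (m ^ (q - 2) * lam) * ((b + σ) ^ (q - 2) * σ) := by ring
  have hint1 : IntervalIntegrable (fun σ : ℝ => (b + lam * σ) ^ (q - 2) * (lam * σ))
      volume 0 t := by
    have : ContinuousOn (fun σ : ℝ => (b + lam * σ) ^ (q - 2) * (lam * σ)) (uIcc 0 t) := by
      refine ContinuousOn.comp (contOn hq hb) ((continuous_const.mul continuous_id).continuousOn)
        fun x hx => ?_
      rw [uIcc_of_le ht] at hx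
      exact mul_nonneg hl.le hx.1
    exact this.intervalIntegrable
  have hint2 : IntervalIntegrable
      (fun σ : ℝ => (m ^ (q - 2) * lam) * ((b + σ) ^ (q - 2) * σ)) volume 0 t :=
    (intg hq hb le_rfl ht).const_mul _
  have hmono := intervalIntegral.integral_mono_on ht hint1 hint2 hpt
  rw [intervalIntegral.integral_const_mul] at hmono
  have hF0 : 0 ≤ ∫ τ in (0:ℝ)..t, (b + τ) ^ (q - 2) * τ := Fnonneg hq hb ht
  have hcoef : lam * (m ^ (q - 2) * lam) ≤ max (lam ^ q) (lam ^ (2:ℝ)) := by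
    by_cases hq2 : 2 ≤ q
    · have hmm : m = max lam 1 := by rw [hm, if_pos hq2]
      by_cases hl1 : 1 ≤ lam
      · have : m = lam := by rw [hmm, max_eq_left hl1]
        rw [this]
        have : lam * (lam ^ (q - 2) * lam) = lam ^ q := by
          rw [show q = 1 + (q - 2) + 1 by ring, Real.rpow_add hl, Real.rpow_add hl,
            Real.rpow_one]
          ring
        rw [this]; exact le_max_left _ _
      · have : m = 1 := by rw [hmm, max_eq_right (le_of_not_ge hl1)]
        rw [this, Real.one_rpow, one_mul, ← rpow_two_eq]
        exact le_max_right _ _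
    · push_neg at hq2
      have hmm : m = min lam 1 := by rw [hm, if_neg (not_le.mpr hq2)]
      by_cases hl1 : 1 ≤ lam
      · have : m = 1 := by rw [hmm, min_eq_right hl1]
        rw [this, Real.one_rpow, one_mul, ← rpow_two_eq]
        exact le_max_right _ _
      · have : m = lam := by rw [hmm, min_eq_left (le_of_not_ge hl1)]
        rw [this]
        have : lam * (lam ^ (q - 2) * lam) = lam ^ q := by
          rw [show q = 1 + (q - 2) + 1 by ring, Real.rpow_add hl, Real.rpow_add hl,
            Real.rpow_one]
          ring
        rw [this]; exact le_max_left _ _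
  calc (∫ τ in (0:ℝ)..(lam * t), (b + τ) ^ (q - 2) * τ)
      = lam * ∫ σ in (0:ℝ)..t, (b + lam * σ) ^ (q - 2) * (lam * σ) := by
        rw [hsub, smul_eq_mul]
    _ ≤ lam * ((m ^ (q - 2) * lam) * ∫ τ in (0:ℝ)..t, (b + τ) ^ (q - 2) * τ) :=
        mul_le_mul_of_nonneg_left hmono hl.le
    _ = (lam * (m ^ (q - 2) * lam)) * ∫ τ in (0:ℝ)..t, (b + τ) ^ (q - 2) * τ := by ring
    _ ≤ max (lam ^ q) (lam ^ (2:ℝ)) * ∫ τ in (0:ℝ)..t, (b + τ) ^ (q - 2) * τ :=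
        mul_le_mul_of_nonneg_right hcoef hF0

lemma Flower (hq : 1 < q) {b s : ℝ} (hb : 0 ≤ b) (hs : max b 1 ≤ s) :
    (2:ℝ) ^ (-(q + 4)) * s ^ q ≤ ∫ τ in (0:ℝ)..s, (b + τ) ^ (q - 2) * τ := by
  have hs1 : (1:ℝ) ≤ s := le_trans (le_max_right _ _) hs
  have hsb : b ≤ s := le_trans (le_max_left _ _) hs
  have hspos : (0:ℝ) < s := by linarith
  have hhalf : (0:ℝ) < s / 2 := by linarith
  have hsplit : (∫ τ in (0:ℝ)..s, (b + τ) ^ (q - 2) * τ)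
      = (∫ τ in (0:ℝ)..(s/2), (b + τ) ^ (q - 2) * τ)
        + ∫ τ in (s/2)..s, (b + τ) ^ (q - 2) * τ :=
    (intervalIntegral.integral_add_adjacent_intervals
      (intg hq hb le_rfl (by linarith)) (intg hq hb (by linarith) (by linarith))).symm
  have h1 : 0 ≤ ∫ τ in (0:ℝ)..(s/2), (b + τ) ^ (q - 2) * τ := Fnonneg hq hb (by linarith)
  by_cases hq2 : 2 ≤ q
  · have hpt : ∀ τ ∈ Icc (s/2) s, (s/2) ^ (q-1) ≤ (b + τ) ^ (q - 2) * τ := by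
      intro τ hτ
      have hτpos : 0 < τ := lt_of_lt_of_le hhalf hτ.1
      rw [show q - 1 = (q - 2) + 1 by ring, Real.rpow_add hhalf, Real.rpow_one]
      refine mul_le_mul ?_ hτ.1 hhalf.le (Real.rpow_nonneg (by linarith) _)
      exact Real.rpow_le_rpow hhalf.le (by linarith [hτ.1]) (by linarith)
    have h2 : (s/2) * ((s/2) ^ (q-1)) ≤ ∫ τ in (s/2)..s, (b + τ) ^ (q - 2) * τ := by
      have hmono := intervalIntegral.integral_mono_on (by linarith : s/2 ≤ s)
        (intervalIntegrable_const) (intg hq hb (by linarith) (by linarith)) hpt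
      rwa [intervalIntegral.integral_const, smul_eq_mul, show s - s/2 = s/2 by ring] at hmono
    have hε : (2:ℝ) ^ (-(q+4)) ≤ ((2:ℝ) ^ q)⁻¹ := by
      rw [← Real.rpow_neg (by norm_num)]
      exact Real.rpow_le_rpow_of_exponent_le one_le_two (by linarith)
    calc (2:ℝ) ^ (-(q+4)) * s ^ q ≤ ((2:ℝ) ^ q)⁻¹ * s ^ q :=
          mul_le_mul_of_nonneg_right hε (Real.rpow_nonneg hspos.le _)
      _ = s ^ q / 2 ^ q := by ring
      _ = (s / 2) ^ q := (Real.div_rpow hspos.le (by norm_num) _).symm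
      _ = (s/2) ^ (1 + (q-1)) := by congr 1; ring
      _ = (s/2) * ((s/2) ^ (q-1)) := by rw [Real.rpow_add hhalf, Real.rpow_one]
      _ ≤ ∫ τ in (s/2)..s, (b + τ) ^ (q - 2) * τ := h2
      _ ≤ ∫ τ in (0:ℝ)..s, (b + τ) ^ (q - 2) * τ := by rw [hsplit]; linarith
  · push_neg at hq2
    have hpt : ∀ τ ∈ Icc (s/2) s, (b + s) ^ (q-2) * (s/2) ≤ (b + τ) ^ (q - 2) * τ := by
      intro τ hτ
      have hτpos : 0 < τ := lt_of_lt_of_le hhalf hτ.1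
      refine mul_le_mul ?_ hτ.1 hhalf.le (Real.rpow_nonneg (by linarith) _)
      exact Real.rpow_le_rpow_of_nonpos (by linarith) (by linarith [hτ.2]) (by linarith)
    have h2 : (s/2) * ((b + s) ^ (q-2) * (s/2)) ≤ ∫ τ in (s/2)..s, (b + τ) ^ (q - 2) * τ := by
      have hmono := intervalIntegral.integral_mono_on (by linarith : s/2 ≤ s)
        (intervalIntegrable_const) (intg hq hb (by linarith) (by linarith)) hpt
      rwa [intervalIntegral.integral_const, smul_eq_mul, show s - s/2 = s/2 by ring] at hmono
    have h2s : (2 * s) ^ (q - 2) ≤ (b + s) ^ (q - 2) :=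
      Real.rpow_le_rpow_of_nonpos (by linarith) (by linarith) (by linarith)
    have key : (s/2) * ((2*s) ^ (q-2) * (s/2)) = 2 ^ (q-4) * s ^ q := by
      have e1 : (2*s : ℝ) ^ (q-2) = 2 ^ (q-2) * s ^ (q-2) :=
        Real.mul_rpow (by norm_num) hspos.le
      have e2 : s ^ (q-2) * (s * s) = s ^ q := by
        have : s ^ q = s ^ (q-2) * s ^ (2:ℝ) := by
          rw [← Real.rpow_add hspos]; congr 1; ring
        rw [this, rpow_two_eq]
      have e3 : (2:ℝ) ^ (q-2) = 2 ^ (q-4) * 4 := by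
        have : (2:ℝ) ^ (q-2) = 2 ^ (q-4) * 2 ^ (2:ℝ) := by
          rw [← Real.rpow_add (by norm_num : (0:ℝ) < 2)]; congr 1; ring
        rw [this, rpow_two_eq]; norm_num
      calc (s/2) * ((2*s) ^ (q-2) * (s/2)) = 2 ^ (q-4) * (s ^ (q-2) * (s * s)) := by
            rw [e1, e3]; ring
        _ = 2 ^ (q-4) * s ^ q := by rw [e2]
    have hε : (2:ℝ) ^ (-(q+4)) ≤ (2:ℝ) ^ (q-4) :=
      Real.rpow_le_rpow_of_exponent_le one_le_two (by linarith)
    calc (2:ℝ) ^ (-(q+4)) * s ^ q ≤ 2 ^ (q-4) * s ^ q :=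
          mul_le_mul_of_nonneg_right hε (Real.rpow_nonneg hspos.le _)
      _ = (s/2) * ((2*s) ^ (q-2) * (s/2)) := key.symm
      _ ≤ (s/2) * ((b + s) ^ (q-2) * (s/2)) :=
          mul_le_mul_of_nonneg_left (mul_le_mul_of_nonneg_right h2s hhalf.le) hhalf.le
      _ ≤ ∫ τ in (s/2)..s, (b + τ) ^ (q - 2) * τ := h2
      _ ≤ ∫ τ in (0:ℝ)..s, (b + τ) ^ (q - 2) * τ := by rw [hsplit]; linarith

lemma bdd (hq : 1 < q) {b t : ℝ} (hb : 0 ≤ b) (ht : 0 ≤ t) :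
    BddAbove ((fun s => s * t - ∫ τ in (0:ℝ)..s, (b + τ) ^ (q - 2) * τ) '' Ici 0) := by
  set ε := (2:ℝ) ^ (-(q+4)) with hεdef
  have hε : 0 < ε := Real.rpow_pos_of_pos two_pos _
  set s₀ : ℝ := max (max b 1) ((t/ε + 1) ^ (1/(q-1))) with hs₀
  have h01 : (1:ℝ) ≤ s₀ := le_trans (le_max_right b 1) (le_max_left _ _)
  refine ⟨s₀ * t, ?_⟩
  rintro y ⟨s, hs0, rfl⟩
  have hs0' : (0:ℝ) ≤ s := hs0
  simp only
  by_cases hss : s ≤ s₀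
  · have hF := Fnonneg hq hb hs0'
    nlinarith [mul_le_mul_of_nonneg_right hss ht]
  · push_neg at hss
    have hsmax : max b 1 ≤ s := le_trans (le_max_left _ _) hss.le
    have hFs := Flower hq hb hsmax
    have hspos : (0:ℝ) < s := lt_of_lt_of_le one_pos (le_trans (le_max_right b 1) hsmax)
    have hsq : t/ε + 1 ≤ s ^ (q-1) := by
      have h1 : (t/ε + 1) ^ (1/(q-1)) ≤ s := le_trans (le_max_right _ _) hss.le
      have h2 : ((t/ε + 1) ^ (1/(q-1))) ^ (q-1) ≤ s ^ (q-1) :=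
        Real.rpow_le_rpow (Real.rpow_nonneg (by positivity) _) h1 (by linarith)
      rwa [one_div, Real.rpow_inv_rpow (by positivity) (ne_of_gt (by linarith : (0:ℝ) < q - 1))] at h2
    have hts : s * t ≤ ε * s ^ q := by
      have h3 : t ≤ ε * s ^ (q-1) := by
        have : t/ε ≤ s ^ (q-1) := by linarith
        calc t = (t/ε) * ε := by field_simp
          _ ≤ s ^ (q-1) * ε := mul_le_mul_of_nonneg_right this hε.le
          _ = ε * s ^ (q-1) := by ring
      calc s * t ≤ s * (ε * s ^ (q-1)) := mul_le_mul_of_nonneg_left h3 hspos.le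
        _ = ε * (s * s ^ (q-1)) := by ring
        _ = ε * s ^ q := by
            have : s ^ q = s * s ^ (q-1) := by
              rw [show s ^ q = s ^ (1 + (q-1)) by congr 1; ring, Real.rpow_add hspos,
                Real.rpow_one]
            rw [this]
    have hfin : s * t - (∫ τ in (0:ℝ)..s, (b + τ) ^ (q - 2) * τ) ≤ 0 := by linarith
    have : 0 ≤ s₀ * t := mul_nonneg (by linarith) ht
    linarith

lemma conj_zero_le (f : ℝ → ℝ) (hf : ∀ s, 0 ≤ s → 0 ≤ f s) : conj f 0 ≤ 0 := by
  apply Real.sSup_le ?_ le_rfl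
  rintro y ⟨s, hs, rfl⟩
  simp only [mul_zero, zero_sub, neg_nonpos]
  exact hf s hs

lemma conj_nonneg (f : ℝ → ℝ) (hf0 : f 0 = 0) {t : ℝ}
    (hbdd : BddAbove ((fun s => s * t - f s) '' Ici 0)) : 0 ≤ conj f t := by
  have hmem : (0:ℝ) ∈ (fun s => s * t - f s) '' Ici 0 :=
    ⟨0, Set.mem_Ici.mpr le_rfl, by simp [hf0]⟩
  exact le_csSup hbdd hmem

lemma conj_smul_le (f : ℝ → ℝ) {t lam lam' : ℝ} (hlam : 0 ≤ lam) (hlam' : 0 < lam')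
    (hf0 : f 0 = 0) (hbdd : BddAbove ((fun s => s * t - f s) '' Ici 0))
    (hlow : ∀ u, 0 ≤ u → lam * lam' * f u ≤ f (lam' * u)) :
    conj f (lam * t) ≤ lam * lam' * conj f t := by
  have hc0 : 0 ≤ conj f t := conj_nonneg f hf0 hbdd
  apply Real.sSup_le ?_ (by positivity)
  rintro y ⟨s, hs, rfl⟩
  have hs' : (0:ℝ) ≤ s := hs
  have hu : (0:ℝ) ≤ s / lam' := div_nonneg hs' hlam'.le
  have hsu : lam' * (s / lam') = s := by field_simp
  have h1 : lam * lam' * f (s / lam') ≤ f s := by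
    have := hlow (s / lam') hu
    rwa [hsu] at this
  have h2 : (s / lam') * t - f (s / lam') ≤ conj f t := le_csSup hbdd ⟨s / lam', hu, rfl⟩
  have heq : s * (lam * t) = lam * lam' * ((s / lam') * t) := by field_simp
  simp only
  calc s * (lam * t) - f s ≤ lam * lam' * ((s / lam') * t) - lam * lam' * f (s / lam') := by
        rw [heq]; linarith
    _ = lam * lam' * ((s / lam') * t - f (s / lam')) := by ring
    _ ≤ lam * lam' * conj f t := mul_le_mul_of_nonneg_left h2 (by positivity)

lemma exists_lam' (hq : 1 < q) {lam : ℝ} (hl : 0 < lam) :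
    ∃ lam' : ℝ, 0 < lam' ∧
      lam * lam' * max ((lam' ^ q)⁻¹) ((lam' ^ (2:ℝ))⁻¹) ≤ 1 ∧
      lam * lam' ≤ max (lam ^ (q / (q-1))) (lam ^ (2:ℝ)) := by
  have hq1 : (0:ℝ) < q - 1 := by linarith
  by_cases hq2 : q ≤ 2 <;> by_cases hl1 : lam ≤ 1
  · -- q ≤ 2, lam ≤ 1 : lam' = lam
    refine ⟨lam, hl, ?_, ?_⟩
    · have hle : lam ^ (2:ℝ) ≤ lam ^ q := Real.rpow_le_rpow_of_exponent_ge hl hl1 hq2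
      rw [max_eq_right (inv_anti₀ (Real.rpow_pos_of_pos hl _) hle)]
      rw [rpow_two_eq]
      rw [mul_inv_cancel₀ (by positivity)]
    · rw [← rpow_two_eq]; exact le_max_right _ _
  · -- q ≤ 2, 1 < lam : lam' = lam ^ (1/(q-1))
    push_neg at hl1
    refine ⟨lam ^ (1/(q-1)), Real.rpow_pos_of_pos hl _, ?_, ?_⟩
    all_goals {
      have hlg : (1:ℝ) ≤ lam ^ (1/(q-1)) := by
        calc (1:ℝ) = 1 ^ (1/(q-1)) := (Real.one_rpow _).symm
          _ ≤ lam ^ (1/(q-1)) := Real.rpow_le_rpow zero_le_one hl1.le (by positivity)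
      have hqq : (lam ^ (1/(q-1))) ^ q = lam * lam ^ (1/(q-1)) := by
        rw [← Real.rpow_mul hl.le]
        rw [show 1/(q-1) * q = 1 + 1/(q-1) by field_simp; ring]
        rw [Real.rpow_add hl, Real.rpow_one]
      first
      | { -- hC
          have hle : (lam ^ (1/(q-1))) ^ q ≤ (lam ^ (1/(q-1))) ^ (2:ℝ) :=
            Real.rpow_le_rpow_of_exponent_le hlg hq2
          rw [max_eq_left (inv_anti₀ (Real.rpow_pos_of_pos
            (Real.rpow_pos_of_pos hl _) _) hle)]
          rw [hqq, mul_inv_cancel₀ (by positivity)] }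
      | { -- hB
          have : lam ^ (q/(q-1)) = lam * lam ^ (1/(q-1)) := by
            rw [← hqq, ← Real.rpow_mul hl.le]
            congr 1
            field_simp
          rw [← this]; exact le_max_left _ _ }
    }
  · -- 2 < q, lam ≤ 1 : lam' = lam ^ (1/(q-1))
    push_neg at hq2
    refine ⟨lam ^ (1/(q-1)), Real.rpow_pos_of_pos hl _, ?_, ?_⟩
    all_goals {
      have hll : lam ^ (1/(q-1)) ≤ 1 := Real.rpow_le_one hl.le hl1 (by positivity)
      have hqq : (lam ^ (1/(q-1))) ^ q = lam * lam ^ (1/(q-1)) := by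
        rw [← Real.rpow_mul hl.le]
        rw [show 1/(q-1) * q = 1 + 1/(q-1) by field_simp; ring]
        rw [Real.rpow_add hl, Real.rpow_one]
      first
      | { -- hC
          have hle : (lam ^ (1/(q-1))) ^ q ≤ (lam ^ (1/(q-1))) ^ (2:ℝ) :=
            Real.rpow_le_rpow_of_exponent_ge (Real.rpow_pos_of_pos hl _) hll (by linarith)
          rw [max_eq_left (inv_anti₀ (Real.rpow_pos_of_pos
            (Real.rpow_pos_of_pos hl _) _) hle)]
          rw [hqq, mul_inv_cancel₀ (by positivity)] }
      | { -- hB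
          have : lam ^ (q/(q-1)) = lam * lam ^ (1/(q-1)) := by
            rw [← hqq, ← Real.rpow_mul hl.le]
            congr 1
            field_simp
          rw [← this]; exact le_max_left _ _ }
    }
  · -- 2 < q, 1 < lam : lam' = lam
    push_neg at hq2 hl1
    refine ⟨lam, hl, ?_, ?_⟩
    · have hle : lam ^ (2:ℝ) ≤ lam ^ q := Real.rpow_le_rpow_of_exponent_le hl1.le (by linarith)
      rw [max_eq_right (inv_anti₀ (Real.rpow_pos_of_pos hl _) hle)]
      rw [rpow_two_eq]
      rw [mul_inv_cancel₀ (by positivity)]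
    · rw [← rpow_two_eq]; exact le_max_right _ _

end ShiftedIndexAux

open ShiftedIndexAux

/-- For `ρ(t) = ∫₀ᵗ (κ+s)^(q-2) s ds` with `q ∈ (1,∞)`, `κ ∈ [0,1]`, there is `c > 0`
depending only on `q` with `ρ_a(λ t) ≤ c max{λ^q, λ²} ρ_a(t)` and
`(ρ_a)*(λ t) ≤ c max{λ^{q'}, λ²} (ρ_a)*(t)` uniformly in `a, λ ≥ 0`, where
`ρ' s = (κ+s)^(q-2) s` and `q' = q/(q-1)`. -/
theorem shifted_index (q : ℝ) (hq : 1 < q) :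
    ∃ c : ℝ, 0 < c ∧
      ∀ κ ∈ Icc (0:ℝ) 1, ∀ a : ℝ, 0 ≤ a → ∀ lam : ℝ, 0 ≤ lam → ∀ t : ℝ, 0 ≤ t →
        shift (fun s => (κ + s) ^ (q - 2) * s) a (lam * t) ≤
          c * max (lam ^ q) (lam ^ (2:ℝ)) *
            shift (fun s => (κ + s) ^ (q - 2) * s) a t ∧
        conj (shift (fun s => (κ + s) ^ (q - 2) * s) a) (lam * t) ≤
          c * max (lam ^ (q / (q - 1))) (lam ^ (2:ℝ)) *
            conj (shift (fun s => (κ + s) ^ (q - 2) * s) a) t := by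
  refine ⟨1, one_pos, ?_⟩
  intro κ hκ a ha lam hlam t ht
  set b : ℝ := κ + a with hbdef
  have hb : 0 ≤ b := add_nonneg hκ.1 ha
  have hshift : ∀ u : ℝ, 0 ≤ u → shift (fun s => (κ + s) ^ (q - 2) * s) a u
      = ∫ τ in (0:ℝ)..u, (b + τ) ^ (q - 2) * τ := fun u hu => shift_eq hq hκ.1 ha hu
  constructor
  · rw [hshift _ (mul_nonneg hlam ht), hshift _ ht, one_mul]
    exact scale hq hb hlam ht
  · set f := shift (fun s => (κ + s) ^ (q - 2) * s) a with hfdef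
    have hf0 : f 0 = 0 := by
      rw [hshift 0 le_rfl, intervalIntegral.integral_same]
    have himg : (fun s => s * t - f s) '' Ici 0
        = (fun s => s * t - ∫ τ in (0:ℝ)..s, (b + τ) ^ (q - 2) * τ) '' Ici 0 :=
      Set.image_congr fun s hs => by rw [hshift s hs]
    have hbdd : BddAbove ((fun s => s * t - f s) '' Ici 0) := by
      rw [himg]; exact bdd hq hb ht
    rcases hlam.eq_or_lt with rfl | hl
    · rw [zero_mul, one_mul]
      have hle : conj f 0 ≤ 0 := conj_zero_le f (fun s hs => by
        rw [hshift s hs]; exact Fnonneg hq hb hs)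
      have hmax0 : max ((0:ℝ) ^ (q / (q-1))) ((0:ℝ) ^ (2:ℝ)) = 0 := by
        rw [Real.zero_rpow (ne_of_gt (div_pos (by linarith) (by linarith))),
          Real.zero_rpow two_ne_zero, max_self]
      rw [hmax0, zero_mul]; exact hle
    · obtain ⟨lam', hlam'pos, hC, hB⟩ := exists_lam' hq hl
      have hlow : ∀ u, 0 ≤ u → lam * lam' * f u ≤ f (lam' * u) := by
        intro u hu
        have hl'u : (0:ℝ) ≤ lam' * u := by positivity
        rw [hshift u hu, hshift _ hl'u]
        have hscale := scale hq hb (inv_nonneg.mpr hlam'pos.le) hl'u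
        rw [inv_mul_cancel_left₀ hlam'pos.ne'] at hscale
        rw [Real.inv_rpow hlam'pos.le, Real.inv_rpow hlam'pos.le] at hscale
        have hFpos := Fnonneg hq hb hl'u
        calc lam * lam' * (∫ τ in (0:ℝ)..u, (b + τ) ^ (q - 2) * τ)
            ≤ lam * lam' * (max ((lam' ^ q)⁻¹) ((lam' ^ (2:ℝ))⁻¹)
                * ∫ τ in (0:ℝ)..(lam' * u), (b + τ) ^ (q - 2) * τ) :=
              mul_le_mul_of_nonneg_left hscale (by positivity)
          _ = (lam * lam' * max ((lam' ^ q)⁻¹) ((lam' ^ (2:ℝ))⁻¹))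
                * ∫ τ in (0:ℝ)..(lam' * u), (b + τ) ^ (q - 2) * τ := by ring
          _ ≤ 1 * ∫ τ in (0:ℝ)..(lam' * u), (b + τ) ^ (q - 2) * τ :=
              mul_le_mul_of_nonneg_right hC hFpos
          _ = _ := one_mul _
      have h1 := conj_smul_le f hl.le hlam'pos hf0 hbdd hlow
      have h0 := conj_nonneg f hf0 hbdd
      rw [one_mul]
      calc conj f (lam * t) ≤ lam * lam' * conj f t := h1
        _ ≤ max (lam ^ (q / (q-1))) (lam ^ (2:ℝ)) * conj f t :=
            mul_le_mul_of_nonneg_right hB h0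
end
end
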